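/- arXiv:1010.3455 — 5 statements merged into one kernel-verified Lean document; each statement's English description precedes it below -/
import Mathlib

section
/- Let M be a finite monoid. Then M is J-trivial (i.e., for all x, y ∈ M, M x M = M y M implies x = y) if and only if there exists a partial order ≤ on M such that x·y ≤ x and x·y ≤ y for all x, y ∈ M. Moreover, for any such partial order ≤ and any x, y ∈ M, x ≤_J y implies x ≤ y. -/
/-- The `J`-preorder on a monoid: `x ≤_J y` iff `x = u * y * v` for some `u, v`. -/
def leJ {M : Type*} [Monoid M] (x y : M) : Prop := ∃ u v : M, x = u * y * v

/-- A monoid is `J`-trivial if `M x M = M y M` implies `x = y`. -/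
def JTrivial (M : Type*) [Monoid M] : Prop :=
  ∀ x y : M, {z : M | ∃ u v : M, z = u * x * v} = {z : M | ∃ u v : M, z = u * y * v} → x = y

lemma leJ_refl {M : Type*} [Monoid M] (x : M) : leJ x x := ⟨1, 1, by simp⟩

lemma leJ_trans {M : Type*} [Monoid M] {x y z : M} (h1 : leJ x y) (h2 : leJ y z) :
    leJ x z := by
  obtain ⟨u, v, rfl⟩ := h1
  obtain ⟨a, b, rfl⟩ := h2
  exact ⟨u * a, b * v, by simp [mul_assoc]⟩

lemma aux_mono {M : Type*} [Monoid M] (r : PartialOrder M)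
    (h : ∀ x y : M, (letI := r; x * y ≤ x) ∧ (letI := r; x * y ≤ y)) :
    ∀ x y : M, leJ x y → (letI := r; x ≤ y) := by
  intro x y ⟨u, v, hxy⟩
  letI := r
  calc x = u * (y * v) := by rw [hxy, mul_assoc]
  _ ≤ y * v := (h u (y * v)).2
  _ ≤ y := (h y v).1

def jOrder {M : Type*} [Monoid M] (anti : ∀ x y : M, leJ x y → leJ y x → x = y) :
    PartialOrder M where
  le := leJ
  le_refl := leJ_refl
  le_trans _ _ _ := leJ_trans
  le_antisymm := anti

/-- A finite monoid `M` is `J`-trivial if and only if there exists a partial order `≤` on `M`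
such that `x * y ≤ x` and `x * y ≤ y` for all `x, y ∈ M`.  Moreover, for any such partial order
and any `x, y ∈ M`, `x ≤_J y` implies `x ≤ y`. -/
theorem jtrivial_iff_exists_leftRightOrder {M : Type*} [Monoid M] [Fintype M] :
    (JTrivial M ↔
      ∃ r : PartialOrder M, ∀ x y : M, (letI := r; x * y ≤ x) ∧ (letI := r; x * y ≤ y)) ∧
    (∀ r : PartialOrder M,
      (∀ x y : M, (letI := r; x * y ≤ x) ∧ (letI := r; x * y ≤ y)) →
      ∀ x y : M, leJ x y → (letI := r; x ≤ y)) := by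
  refine ⟨⟨fun hJ => ?_, fun ⟨r, hr⟩ => ?_⟩, fun r hr => aux_mono r hr⟩
  · have anti : ∀ x y : M, leJ x y → leJ y x → x = y := by
      intro x y hxy hyx
      apply hJ
      ext z
      constructor
      · rintro ⟨u, v, rfl⟩
        obtain ⟨a, b, rfl⟩ := hxy
        exact ⟨u * a, b * v, by simp [mul_assoc]⟩
      · rintro ⟨u, v, rfl⟩
        obtain ⟨a, b, rfl⟩ := hyx
        exact ⟨u * a, b * v, by simp [mul_assoc]⟩
    exact ⟨jOrder anti, fun x y => ⟨⟨1, y, by simp⟩, ⟨x, 1, by simp⟩⟩⟩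
  · intro x y hset
    have hx : leJ x y := by
      have : x ∈ {z : M | ∃ u v : M, z = u * y * v} := hset ▸ ⟨1, 1, by simp⟩
      exact this
    have hy : leJ y x := by
      have : y ∈ {z : M | ∃ u v : M, z = u * x * v} := hset.symm ▸ ⟨1, 1, by simp⟩
      exact this
    exact r.le_antisymm x y (aux_mono r hr x y hx) (aux_mono r hr y x hy)
end

section
/- Let K be a field and M a finite J-trivial monoid. For x ∈ M let S_x denote the one-dimensional right MonoidAlgebra K M-module with basis ε_x and action ε_x · y = ε_x if x·y = x and 0 otherwise (y ∈ M). Then the modules S_e, for e ranging over the idempotents of M, form a complete set of pairwise non-isomorphic representatives of the isomorphism classes of simple right MonoidAlgebra K M-modules: for idempotents e, f, S_e ≅ S_f implies e = f, and every simple right MonoidAlgebra K M-module is isomorphic to S_e for some idempotent e of M. -/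
open Classical

/-- `N` realizes the right module `S_x`: it has a nonzero vector `ε` spanning it over `K`
(where `K` acts through the central embedding `K → K[M]`), on which each `y ∈ M` acts by
`ε · y = ε` if `x * y = x` and `ε · y = 0` otherwise.  Right `K[M]`-modules are formalized as
modules over the opposite algebra. -/
def IsSx (K : Type*) {M : Type*} [Field K] [Monoid M] (x : M)
    (N : Type*) [AddCommGroup N] [Module (MonoidAlgebra K M)ᵐᵒᵖ N] : Prop :=
  ∃ ε : N, ε ≠ 0 ∧
    (∀ w : N, ∃ c : K,
      w = MulOpposite.op (algebraMap K (MonoidAlgebra K M) c) • ε) ∧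
    (∀ y : M, MulOpposite.op ((MonoidAlgebra.of K M) y) • ε
        = if x * y = x then ε else 0)

universe u

theorem jset_mono {M : Type*} [Monoid M] {x y : M} (h : leJ x y) :
    {z : M | ∃ u v : M, z = u * x * v} ⊆ {z : M | ∃ u v : M, z = u * y * v} := by
  rintro z ⟨a, b, rfl⟩
  obtain ⟨u, v, rfl⟩ := h
  exact ⟨a * u, v * b, by simp [mul_assoc]⟩

theorem leJ_antisymm {M : Type*} [Monoid M] (hJ : JTrivial M) {x y : M}
    (h1 : leJ x y) (h2 : leJ y x) : x = y :=
  hJ x y (Set.Subset.antisymm (jset_mono h1) (jset_mono h2))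

theorem exists_leJ_minimal {M : Type*} [Monoid M] [Fintype M] (hJ : JTrivial M)
    (C : Set M) (hC : C.Nonempty) :
    ∃ x ∈ C, ∀ z ∈ C, leJ z x → z = x := by
  classical
  obtain ⟨x, hxC, hmin⟩ := Set.exists_min_image C
    (fun x => {z : M | ∃ u v : M, z = u * x * v}.ncard) (Set.toFinite C) hC
  refine ⟨x, hxC, fun z hz hle => ?_⟩
  by_contra hne
  have hss : {w : M | ∃ u v : M, w = u * z * v} ⊂ {w : M | ∃ u v : M, w = u * x * v} :=
    (jset_mono hle).ssubset_of_ne (fun h => hne (hJ z x h))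
  exact absurd (hmin z hz) (not_le.mpr (Set.ncard_lt_ncard hss (Set.toFinite _)))

theorem eat_of_eyz {M : Type*} [Monoid M] (hJ : JTrivial M) {e y z : M}
    (h : e * (y * z) = e) : e * y = e := by
  refine leJ_antisymm hJ ⟨1, y, by rw [one_mul]⟩ ⟨1, z, ?_⟩
  rw [one_mul, mul_assoc, h]

noncomputable def chiHom (K : Type*) [Field K] {M : Type*} [Monoid M] (hJ : JTrivial M)
    (e : M) : M →* K where
  toFun y := if e * y = e then 1 else 0
  map_one' := by simp
  map_mul' y z := by
    by_cases h : e * (y * z) = e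
    · have hy : e * y = e := eat_of_eyz hJ h
      have hz : e * z = e := by rw [← mul_assoc, hy] at h; exact h
      simp [h, hy, hz]
    · have : ¬ (e * y = e ∧ e * z = e) := by
        rintro ⟨hy, hz⟩; exact h (by rw [← mul_assoc, hy, hz])
      by_cases hy : e * y = e
      · have hz : ¬ e * z = e := fun hz => this ⟨hy, hz⟩
        simp [h, hy, hz]
      · simp [h, hy]

section ModuleLemmas
variable {K : Type*} [Field K] {M : Type*} [Monoid M]
variable {N : Type*} [AddCommGroup N] [Module (MonoidAlgebra K M)ᵐᵒᵖ N]

open MulOpposite MonoidAlgebra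

theorem op_single_smul (y : M) (c : K) (v : N) :
    op (single y c : MonoidAlgebra K M) • v
      = op (algebraMap K (MonoidAlgebra K M) c) • (op (of K M y) • v) := by
  rw [← mul_smul, ← op_mul, ← Algebra.commutes, ← single_eq_algebraMap_mul_of]

theorem op_of_smul_op_of_smul (x y : M) (v : N) :
    op (of K M y) • (op (of K M x) • v) = op (of K M (x * y)) • v := by
  rw [← mul_smul, ← op_mul, ← map_mul]

theorem op_alg_smul_comm (c : K) (a : MonoidAlgebra K M) (v : N) :
    op (algebraMap K (MonoidAlgebra K M) c) • (op a • v)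
      = op a • (op (algebraMap K (MonoidAlgebra K M) c) • v) := by
  rw [← mul_smul, ← mul_smul, ← op_mul, ← op_mul, Algebra.commutes]

theorem op_smul_mem (P : AddSubmonoid N) (v : N)
    (h : ∀ (y : M) (c : K), op (single y c : MonoidAlgebra K M) • v ∈ P)
    (f : MonoidAlgebra K M) : op f • v ∈ P := by
  induction f using MonoidAlgebra.induction with
  | zero => simpa using P.zero_mem
  | single_add y c g _ _ ih =>
      have h3 := P.add_mem (h y c) ih
      rw [← add_smul, ← op_add] at h3
      exact h3

end ModuleLemmas

open MulOpposite MonoidAlgebra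

theorem part1 (K : Type u) [Field K] {M : Type u} [Monoid M] (hJ : JTrivial M)
    (e f : M) (he : IsIdempotentElem e) (_hf : IsIdempotentElem f)
    (N : Type u) [AddCommGroup N] [Module (MonoidAlgebra K M)ᵐᵒᵖ N]
    (hSe : IsSx K e N) (hSf : IsSx K f N) : e = f := by
  obtain ⟨ε, hε, hspan, hacte⟩ := hSe
  obtain ⟨ε', hε', _, hactf⟩ := hSf
  obtain ⟨c, hc⟩ := hspan ε'
  have key : ∀ y : M, op (of K M y) • ε'
      = op (algebraMap K (MonoidAlgebra K M) c) • (op (of K M y) • ε) := by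
    intro y
    rw [hc, op_alg_smul_comm]
  have hef : e * f = e := by
    by_contra hne
    have h1 := hactf f
    rw [if_pos (show f * f = f from _hf)] at h1
    have h2 := key f
    rw [hacte f, if_neg hne, smul_zero, h1] at h2
    exact hε' h2
  have hfe : f * e = f := by
    by_contra hne
    have h1 := hactf e
    rw [if_neg hne] at h1
    have h2 := key e
    rw [hacte e, if_pos (show e * e = e from he), ← hc, h1] at h2
    exact hε' h2.symm
  exact leJ_antisymm hJ ⟨e, 1, by rw [mul_one, hef]⟩ ⟨f, 1, by rw [mul_one, hfe]⟩

theorem part2 (K : Type u) [Field K] {M : Type u} [Monoid M] (hJ : JTrivial M) (e : M)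
    (_he : IsIdempotentElem e) :
    ∃ (N : Type u) (iN : AddCommGroup N)
      (iM : @Module (MonoidAlgebra K M)ᵐᵒᵖ N _ iN.toAddCommMonoid),
      @IsSx K M _ _ e N iN iM ∧ @IsSimpleModule (MonoidAlgebra K M)ᵐᵒᵖ _ N iN iM := by
  classical
  let φ : MonoidAlgebra K M →ₐ[K] K := MonoidAlgebra.lift K K M (chiHom K hJ e)
  let ψ : (MonoidAlgebra K M)ᵐᵒᵖ →+* K :=
    RingHom.fromOpposite φ.toRingHom (fun x y => mul_comm _ _)
  letI iM : Module (MonoidAlgebra K M)ᵐᵒᵖ K := Module.compHom K ψ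
  have hsmul : ∀ (a : (MonoidAlgebra K M)ᵐᵒᵖ) (w : K), a • w = φ a.unop * w :=
    fun a w => rfl
  have hφa : ∀ c : K, φ (algebraMap K (MonoidAlgebra K M) c) = c := fun c => by
    rw [AlgHom.commutes]; rfl
  have hφof : ∀ y : M, φ (of K M y) = if e * y = e then 1 else 0 := fun y => by
    rw [MonoidAlgebra.lift_of]; rfl
  refine ⟨K, inferInstance, iM, ⟨1, one_ne_zero, ?_, ?_⟩, ?_⟩
  · intro w
    exact ⟨w, by rw [hsmul, unop_op, hφa, mul_one]⟩
  · intro y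
    rw [hsmul, unop_op, hφof]
    split_ifs <;> simp
  · refine (isSimpleModule_iff ..).mpr ⟨fun P => ?_⟩
    rcases eq_or_ne P ⊥ with h | h
    · exact Or.inl h
    · refine Or.inr ?_
      obtain ⟨v, hvP, hv⟩ := Submodule.exists_mem_ne_zero_of_ne_bot h
      rw [Submodule.eq_top_iff']
      intro w
      have hw : w = op (algebraMap K (MonoidAlgebra K M) (w * v⁻¹)) • v := by
        rw [hsmul, unop_op, hφa, mul_assoc, inv_mul_cancel₀ hv, mul_one]
      rw [hw]
      exact P.smul_mem _ hvP

theorem part3 (K : Type u) [Field K] {M : Type u} [Monoid M] [Fintype M] (hJ : JTrivial M)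
    (N : Type u) [AddCommGroup N] [Module (MonoidAlgebra K M)ᵐᵒᵖ N]
    (hs : IsSimpleModule (MonoidAlgebra K M)ᵐᵒᵖ N) :
    ∃ e : M, IsIdempotentElem e ∧ IsSx K e N := by
  classical
  haveI := hs
  haveI : Nontrivial N := IsSimpleModule.nontrivial (MonoidAlgebra K M)ᵐᵒᵖ N
  obtain ⟨w0, hw0⟩ := exists_ne (0 : N)
  set C : Set M := {z : M | ∃ w : N, op (of K M z) • w ≠ 0} with hCdef
  have h1C : (1 : M) ∈ C :=
    ⟨w0, by rw [map_one, op_one, one_smul]; exact hw0⟩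
  obtain ⟨e, heC, hemin⟩ := exists_leJ_minimal hJ C ⟨1, h1C⟩
  have hzero : ∀ z : M, leJ z e → z ≠ e → ∀ w : N, op (of K M z) • w = 0 := by
    intro z hle hne w
    by_contra h
    exact hne (hemin z ⟨w, h⟩ hle)
  let W0 : AddSubmonoid N :=
    { carrier := {v | ∃ w : N, v = op (of K M e) • w}
      zero_mem' := ⟨0, (smul_zero _).symm⟩
      add_mem' := by
        rintro a b ⟨wa, rfl⟩ ⟨wb, rfl⟩
        exact ⟨wa + wb, (smul_add _ _ _).symm⟩ }
  let W : Submodule (MonoidAlgebra K M)ᵐᵒᵖ N :=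
    { W0 with
      smul_mem' := by
        rintro a v ⟨w, rfl⟩
        rw [← MulOpposite.op_unop a]
        refine op_smul_mem W0 _ (fun y c => ?_) a.unop
        rw [op_single_smul, op_of_smul_op_of_smul]
        by_cases hy : e * y = e
        · rw [hy]
          exact ⟨op (algebraMap K (MonoidAlgebra K M) c) • w,
            (op_alg_smul_comm c (of K M e) w)⟩
        · rw [hzero (e * y) ⟨1, y, by rw [one_mul]⟩ hy w, smul_zero]
          exact W0.zero_mem }
  have hall : ∀ v : N, ∃ w : N, v = op (of K M e) • w := by
    have hWtop : W = ⊤ := by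
      rcases eq_bot_or_eq_top W with h | h
      · exfalso
        obtain ⟨w, hw⟩ := heC
        have hmem : op (of K M e) • w ∈ W := ⟨w, rfl⟩
        rw [h] at hmem
        exact hw (by simpa using hmem)
      · exact h
    intro v
    have : v ∈ W := hWtop ▸ Submodule.mem_top
    exact this
  have hee : e * e = e := by
    by_contra hne
    obtain ⟨w, hw⟩ := heC
    apply hw
    obtain ⟨u, hu⟩ := hall w
    rw [hu, op_of_smul_op_of_smul, hzero (e * e) ⟨1, e, by rw [one_mul]⟩ hne u]
  have hact : ∀ (y : M) (v : N), op (of K M y) • v = if e * y = e then v else 0 := by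
    intro y v
    obtain ⟨u, hu⟩ := hall v
    by_cases hy : e * y = e
    · rw [if_pos hy, hu, op_of_smul_op_of_smul, hy]
    · rw [if_neg hy, hu, op_of_smul_op_of_smul,
        hzero (e * y) ⟨1, y, by rw [one_mul]⟩ hy u]
  let P0 : AddSubmonoid N :=
    { carrier := {v | ∃ c : K, v = op (algebraMap K (MonoidAlgebra K M) c) • w0}
      zero_mem' := ⟨0, by rw [map_zero, op_zero, zero_smul]⟩
      add_mem' := by
        rintro a b ⟨ca, rfl⟩ ⟨cb, rfl⟩
        exact ⟨ca + cb, by rw [map_add, op_add, add_smul]⟩ }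
  have hPc : ∀ (c : K) (v : N), v ∈ P0 →
      op (algebraMap K (MonoidAlgebra K M) c) • v ∈ P0 := by
    rintro c v ⟨c', rfl⟩
    exact ⟨c' * c, by rw [map_mul, op_mul, mul_smul]⟩
  let P : Submodule (MonoidAlgebra K M)ᵐᵒᵖ N :=
    { P0 with
      smul_mem' := by
        rintro a v ⟨c, rfl⟩
        rw [← MulOpposite.op_unop a, ← op_alg_smul_comm]
        refine hPc c _ (op_smul_mem P0 w0 (fun y c' => ?_) a.unop)
        rw [op_single_smul, hact y w0]
        by_cases hy : e * y = e
        · rw [if_pos hy]; exact ⟨c', rfl⟩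
        · rw [if_neg hy, smul_zero]; exact P0.zero_mem }
  have hPtop : P = ⊤ := by
    rcases eq_bot_or_eq_top P with h | h
    · exfalso
      have hmem : w0 ∈ P := ⟨1, by rw [map_one, op_one, one_smul]⟩
      rw [h] at hmem
      exact hw0 (by simpa using hmem)
    · exact h
  refine ⟨e, hee, w0, hw0, ?_, fun y => hact y w0⟩
  intro w
  have : w ∈ P := hPtop ▸ Submodule.mem_top
  exact this


/-- For a field `K` and a finite `J`-trivial monoid `M`, the modules `S_e`, for `e` ranging
over the idempotents of `M`, form a complete set of pairwise non-isomorphic representatives of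
the isomorphism classes of simple right `K[M]`-modules: if some module realizes both `S_e` and
`S_f` for idempotents `e, f`, then `e = f`; each `S_e` is realized by a simple right module;
and every simple right `K[M]`-module realizes `S_e` for some idempotent `e`. -/
theorem simple_modules_indexed_by_idempotents (K : Type u) [Field K] {M : Type u}
    [Monoid M] [Fintype M] (hJ : JTrivial M) :
    (∀ e f : M, IsIdempotentElem e → IsIdempotentElem f →
      ∀ (N : Type u) [AddCommGroup N] [Module (MonoidAlgebra K M)ᵐᵒᵖ N],
        IsSx K e N → IsSx K f N → e = f) ∧
    (∀ e : M, IsIdempotentElem e →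
      ∃ (N : Type u) (iN : AddCommGroup N)
        (iM : @Module (MonoidAlgebra K M)ᵐᵒᵖ N _ iN.toAddCommMonoid),
        @IsSx K M _ _ e N iN iM ∧ @IsSimpleModule (MonoidAlgebra K M)ᵐᵒᵖ _ N iN iM) ∧
    (∀ (N : Type u) [AddCommGroup N] [Module (MonoidAlgebra K M)ᵐᵒᵖ N],
      IsSimpleModule (MonoidAlgebra K M)ᵐᵒᵖ N →
      ∃ e : M, IsIdempotentElem e ∧ IsSx K e N) := by
  exact ⟨fun e f he hf N _ _ hSe hSf => part1 K hJ e f he hf N hSe hSf,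
    fun e he => part2 K hJ e he,
    fun N _ _ hs => part3 K hJ N hs⟩
end

section
/- Let K be a field and M a finite J-trivial monoid that is generated (as a monoid) by its idempotents. Then the Jacobson radical of MonoidAlgebra K M is equal to the two-sided ideal of MonoidAlgebra K M generated by the set {g·h − h·g : g, h ∈ M}. -/
namespace JTriv

variable {M : Type*} [Monoid M]

theorem leJ_trans {x y z : M} (h1 : leJ x y) (h2 : leJ y z) : leJ x z := by
  obtain ⟨u, v, rfl⟩ := h1
  obtain ⟨u', v', rfl⟩ := h2
  exact ⟨u * u', v' * v, by simp [mul_assoc]⟩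

theorem leJ_antisymm (hJ : JTrivial M) {x y : M} (h1 : leJ x y) (h2 : leJ y x) : x = y := by
  apply hJ
  ext z
  simp only [Set.mem_setOf_eq]
  constructor
  · rintro ⟨a, b, rfl⟩
    obtain ⟨u, v, rfl⟩ := h1
    exact ⟨a * u, v * b, by simp [mul_assoc]⟩
  · rintro ⟨a, b, rfl⟩
    obtain ⟨u, v, rfl⟩ := h2
    exact ⟨a * u, v * b, by simp [mul_assoc]⟩

/-- The elementary commutation relation. -/
def rC : M → M → Prop := fun a b => ∃ g h : M, a = g * h ∧ b = h * g

/-- The commutation congruence. -/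
def cC (M : Type*) [Monoid M] : Con M := conGen rC

open MonoidAlgebra

/-- commutator generators -/
def gens (K : Type*) [Field K] (M : Type*) [Monoid M] : Set (MonoidAlgebra K M) :=
  {z | ∃ g h : M, z = of K M g * of K M h - of K M h * of K M g}

/-- span of differences of congruent elements -/
noncomputable def D (K : Type*) [Field K] (M : Type*) [Monoid M] : Submodule K (MonoidAlgebra K M) :=
  Submodule.span K {z | ∃ x y : M, cC M x y ∧ z = of K M x - of K M y}

variable {K : Type*} [Field K]

theorem of_mem_D {x y : M} (h : cC M x y) : of K M x - of K M y ∈ D K M :=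
  Submodule.subset_span ⟨x, y, h, rfl⟩

theorem D_mul_left (a : MonoidAlgebra K M) {d : MonoidAlgebra K M} (hd : d ∈ D K M) :
    a * d ∈ D K M := by
  induction hd using Submodule.span_induction with
  | mem z hz =>
      obtain ⟨x, y, hxy, rfl⟩ := hz
      induction a using MonoidAlgebra.induction with
      | zero => simpa using (D K M).zero_mem
      | single_add m k rest _ _ ih =>
          rw [add_mul]
          refine (D K M).add_mem ?_ ih
          have hsingle : (MonoidAlgebra.single m k : MonoidAlgebra K M) = k • of K M m := by
            simp [MonoidAlgebra.of_apply, MonoidAlgebra.smul_single]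
          rw [hsingle, smul_mul_assoc]
          refine (D K M).smul_mem k ?_
          have : of K M m * (of K M x - of K M y) = of K M (m * x) - of K M (m * y) := by
            rw [mul_sub, ← map_mul, ← map_mul]
          rw [this]
          exact of_mem_D ((cC M).mul ((cC M).refl m) hxy)
  | zero => simpa using (D K M).zero_mem
  | add u v _ _ hu hv => rw [mul_add]; exact (D K M).add_mem hu hv
  | smul k u _ hu => rw [mul_smul_comm]; exact (D K M).smul_mem k hu

theorem D_mul_right (a : MonoidAlgebra K M) {d : MonoidAlgebra K M} (hd : d ∈ D K M) :
    d * a ∈ D K M := by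
  induction hd using Submodule.span_induction with
  | mem z hz =>
      obtain ⟨x, y, hxy, rfl⟩ := hz
      induction a using MonoidAlgebra.induction with
      | zero => simpa using (D K M).zero_mem
      | single_add m k rest _ _ ih =>
          rw [mul_add]
          refine (D K M).add_mem ?_ ih
          have hsingle : (MonoidAlgebra.single m k : MonoidAlgebra K M) = k • of K M m := by
            simp [MonoidAlgebra.of_apply, MonoidAlgebra.smul_single]
          rw [hsingle, mul_smul_comm]
          refine (D K M).smul_mem k ?_
          have : (of K M x - of K M y) * of K M m = of K M (x * m) - of K M (y * m) := by
            rw [sub_mul, ← map_mul, ← map_mul]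
          rw [this]
          exact of_mem_D ((cC M).mul hxy ((cC M).refl m))
  | zero => simpa using (D K M).zero_mem
  | add u v _ _ hu hv => rw [add_mul]; exact (D K M).add_mem hu hv
  | smul k u _ hu => rw [smul_mul_assoc]; exact (D K M).smul_mem k hu

/-- `D` as a two-sided ideal. -/
noncomputable def DT (K : Type*) [Field K] (M : Type*) [Monoid M] : TwoSidedIdeal (MonoidAlgebra K M) :=
  TwoSidedIdeal.mk' (D K M) (D K M).zero_mem (fun hx hy => (D K M).add_mem hx hy)
    (fun hx => (D K M).neg_mem hx) (fun hy => D_mul_left _ hy) (fun hx => D_mul_right _ hx)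

theorem C_le_D {a : MonoidAlgebra K M} (ha : a ∈ TwoSidedIdeal.span (gens K M)) :
    a ∈ D K M := by
  have := TwoSidedIdeal.mem_span_iff.mp ha (DT K M) ?_
  · rwa [DT, TwoSidedIdeal.mem_mk'] at this
  · rintro z ⟨g, h, rfl⟩
    rw [SetLike.mem_coe, DT, TwoSidedIdeal.mem_mk']
    have : of K M g * of K M h - of K M h * of K M g = of K M (g * h) - of K M (h * g) := by
      rw [← map_mul, ← map_mul]
    rw [this]
    exact of_mem_D (ConGen.Rel.of _ _ ⟨g, h, rfl, rfl⟩)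

theorem cC_of_comm (g h : M) : cC M (g * h) (h * g) :=
  ConGen.Rel.of _ _ ⟨g, h, rfl, rfl⟩



theorem D_le_C {a : MonoidAlgebra K M} (ha : a ∈ D K M) :
    a ∈ TwoSidedIdeal.span (gens K M) := by
  set C := TwoSidedIdeal.span (gens K M) with hC
  induction ha using Submodule.span_induction with
  | mem z hz =>
      obtain ⟨x, y, hxy, rfl⟩ := hz
      -- build a congruence whose relation is "difference in C"
      let c' : Con M :=
        { r := fun x y => of K M x - of K M y ∈ C
          iseqv := ⟨fun x => by simp [C.zero_mem],
            fun {x y} h => by simpa using C.neg_mem h,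
            fun {x y z} h1 h2 => by
              have := C.add_mem h1 h2
              simpa [sub_add_sub_cancel] using this⟩
          mul' := fun {w x y z} h1 h2 => by
            have key : of K M (w * y) - of K M (x * z)
                = of K M w * (of K M y - of K M z) + (of K M w - of K M x) * of K M z := by
              rw [map_mul, map_mul, mul_sub, sub_mul]
              abel
            show of K M (w * y) - of K M (x * z) ∈ C
            rw [key]
            exact C.add_mem (C.mul_mem_left _ _ h2) (C.mul_mem_right _ _ h1) }
      have hle : cC M ≤ c' := by
        apply Con.conGen_le.mpr
        rintro x y ⟨g, h, rfl, rfl⟩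
        show of K M (g * h) - of K M (h * g) ∈ C
        rw [map_mul, map_mul]
        exact TwoSidedIdeal.subset_span ⟨g, h, rfl⟩
      exact hle hxy
  | zero => exact C.zero_mem
  | add u v _ _ hu hv => exact C.add_mem hu hv
  | smul k u _ hu =>
      rw [Algebra.smul_def]
      exact C.mul_mem_left _ _ hu

open Classical in
/-- The character attached to `m`: `u ↦ [u * m = m]`. -/
noncomputable def chiHom (hJ : JTrivial M) (K : Type*) [Field K] (m : M) : M →* K where
  toFun u := if u * m = m then 1 else 0
  map_one' := if_pos (one_mul m)
  map_mul' u v := by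
    show (if u * v * m = m then (1:K) else 0)
      = (if u * m = m then (1:K) else 0) * (if v * m = m then (1:K) else 0)
    by_cases hv : v * m = m
    · rw [mul_assoc, hv]; simp
    · rw [if_neg hv, mul_zero, if_neg]
      intro h
      exact hv (leJ_antisymm hJ ⟨v, 1, (mul_one _).symm⟩
        ⟨u, 1, by rw [mul_one, ← mul_assoc, h]⟩)

theorem chi_eq_of_cC (hJ : JTrivial M) (K : Type*) [Field K] (m : M) {x y : M}
    (h : cC M x y) : chiHom hJ K m x = chiHom hJ K m y := by
  have hle : cC M ≤ Con.ker (chiHom hJ K m) := by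
    apply Con.conGen_le.mpr
    rintro x y ⟨g, h, rfl, rfl⟩
    show chiHom hJ K m (g * h) = chiHom hJ K m (h * g)
    rw [map_mul, map_mul, mul_comm]
  exact hle h

theorem D_mul_of_mem (hJ : JTrivial M) {K : Type*} [Field K] (m : M)
    {d : MonoidAlgebra K M} (hd : d ∈ D K M) :
    d * of K M m ∈ Submodule.span K {w : MonoidAlgebra K M |
      ∃ z : M, (leJ z m ∧ z ≠ m) ∧ w = of K M z} := by
  set B := Submodule.span K {w : MonoidAlgebra K M |
      ∃ z : M, (leJ z m ∧ z ≠ m) ∧ w = of K M z} with hB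
  induction hd using Submodule.span_induction with
  | mem z hz =>
      obtain ⟨x, y, hxy, rfl⟩ := hz
      have key : (of K M x - of K M y) * of K M m = of K M (x * m) - of K M (y * m) := by
        rw [sub_mul, ← map_mul, ← map_mul]
      rw [key]
      have hchi := chi_eq_of_cC hJ K m hxy
      by_cases hx : x * m = m
      · have hy : y * m = m := by
          by_contra hy
          simp only [chiHom, MonoidHom.coe_mk, OneHom.coe_mk] at hchi
          rw [if_pos hx, if_neg hy] at hchi
          exact one_ne_zero hchi
        rw [hx, hy, sub_self]
        exact B.zero_mem
      · have hy : ¬ y * m = m := by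
          intro hy
          simp only [chiHom, MonoidHom.coe_mk, OneHom.coe_mk] at hchi
          rw [if_neg hx, if_pos hy] at hchi
          exact one_ne_zero hchi.symm
        refine B.sub_mem ?_ ?_
        · exact Submodule.subset_span ⟨x * m, ⟨⟨x, 1, (mul_one _).symm⟩, hx⟩, rfl⟩
        · exact Submodule.subset_span ⟨y * m, ⟨⟨y, 1, (mul_one _).symm⟩, hy⟩, rfl⟩
  | zero => rw [zero_mul]; exact B.zero_mem
  | add u v _ _ hu hv => rw [add_mul]; exact B.add_mem hu hv
  | smul k u _ hu => rw [smul_mul_assoc]; exact B.smul_mem k hu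

open Classical in
theorem nilpotent_of_mem_D (hJ : JTrivial M) [Fintype M] {K : Type*} [Field K]
    {d : MonoidAlgebra K M} (hd : d ∈ D K M) : ∃ k : ℕ, d ^ k = 0 := by
  set rlt : M → M → Prop := fun z m => leJ z m ∧ z ≠ m with hrlt
  haveI : IsTrans M rlt := ⟨by
    rintro a b c ⟨h1, h2⟩ ⟨h3, h4⟩
    refine ⟨leJ_trans h1 h3, ?_⟩
    rintro rfl
    exact h2 (leJ_antisymm hJ h1 h3)⟩
  haveI : IsIrrefl M rlt := ⟨fun a h => h.2 rfl⟩
  have wf : WellFounded rlt := Finite.wellFounded_of_trans_of_irrefl rlt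
  have main : ∀ m : M, ∀ d : MonoidAlgebra K M, d ∈ D K M →
      ∃ k : ℕ, d ^ k * of K M m = 0 := by
    intro m
    induction m using WellFounded.induction wf with
    | _ m IH =>
      intro d hd
      have hA := D_mul_of_mem hJ m hd
      rw [Submodule.mem_span_set] at hA
      obtain ⟨cf, hsupp, hsum⟩ := hA
      set f : MonoidAlgebra K M → ℕ :=
        fun v => if h : ∃ k : ℕ, d ^ k * v = 0 then Nat.find h else 0 with hf
      set kk := cf.support.sup f with hkk
      have key : ∀ v ∈ cf.support, d ^ kk * v = 0 := by
        intro v hv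
        obtain ⟨z, hz, rfl⟩ := hsupp hv
        have hex : ∃ k : ℕ, d ^ k * of K M z = 0 := IH z hz d hd
        have hfv : d ^ f (of K M z) * of K M z = 0 := by
          rw [hf]
          simp only [dif_pos hex]
          exact Nat.find_spec hex
        have hle : f (of K M z) ≤ kk := Finset.le_sup hv
        rw [← Nat.sub_add_cancel hle, pow_add, mul_assoc, hfv, mul_zero]
      refine ⟨kk + 1, ?_⟩
      rw [pow_succ, mul_assoc, ← hsum, Finsupp.sum, Finset.mul_sum]
      refine Finset.sum_eq_zero fun v hv => ?_
      rw [mul_smul_comm, key v hv, smul_zero]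
  obtain ⟨k, hk⟩ := main 1 d hd
  exact ⟨k, by rwa [map_one, mul_one] at hk⟩

theorem C_le_jacobson (hJ : JTrivial M) [Fintype M] {K : Type*} [Field K]
    {a : MonoidAlgebra K M} (ha : a ∈ TwoSidedIdeal.span (gens K M)) :
    a ∈ Ideal.jacobson (⊥ : Ideal (MonoidAlgebra K M)) := by
  rw [Ideal.jacobson]
  rw [Submodule.mem_sInf]
  rintro J ⟨-, hmax⟩
  by_contra hnot
  have hlt : J < J ⊔ Ideal.span {a} := by
    refine lt_of_le_of_ne le_sup_left fun he => hnot ?_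
    have : a ∈ J ⊔ Ideal.span {a} :=
      Submodule.mem_sup_right (Ideal.subset_span (Set.mem_singleton a))
    rwa [← he] at this
  have htop : J ⊔ Ideal.span {a} = ⊤ := hmax.out.2 _ hlt
  have h1 : (1 : MonoidAlgebra K M) ∈ J ⊔ Ideal.span {a} := htop ▸ Submodule.mem_top
  obtain ⟨x, hx, y, hy, hxy⟩ := Submodule.mem_sup.mp h1
  obtain ⟨r, rfl⟩ := Submodule.mem_span_singleton.mp hy
  have hyD : r • a ∈ D K M := by
    rw [smul_eq_mul]
    exact D_mul_left r (C_le_D ha)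
  obtain ⟨k, hk⟩ := nilpotent_of_mem_D hJ hyD
  have hxeq : x = 1 - r • a := by
    rw [← hxy]; abel
  have hunit : IsUnit x := by
    rw [hxeq]
    exact IsNilpotent.isUnit_one_sub ⟨k, hk⟩
  exact hmax.ne_top (Ideal.eq_top_of_isUnit_mem J hx hunit)

section Quot

variable [Fintype M] (hgen : Submonoid.closure {e : M | IsIdempotentElem e} = ⊤)

theorem L_comm (p q : (cC M).Quotient) : p * q = q * p := by
  obtain ⟨x, rfl⟩ := Con.mk'_surjective p
  obtain ⟨y, rfl⟩ := Con.mk'_surjective q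
  rw [← map_mul, ← map_mul]
  exact (Con.eq _).mpr (cC_of_comm x y)

include hgen in
theorem L_idem (p : (cC M).Quotient) : p * p = p := by
  obtain ⟨x, rfl⟩ := Con.mk'_surjective p
  have hx : x ∈ Submonoid.closure {e : M | IsIdempotentElem e} := hgen ▸ Submonoid.mem_top x
  induction hx using Submonoid.closure_induction with
  | mem e he => rw [← map_mul]; exact congrArg _ he
  | one => rw [map_one, one_mul]
  | mul x y hx hy ihx ihy =>
      rw [map_mul]
      set X := (cC M).mk' x
      set Y := (cC M).mk' y
      calc X * Y * (X * Y) = X * X * (Y * Y) := by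
            rw [mul_assoc, ← mul_assoc Y X, L_comm Y X, mul_assoc, ← mul_assoc]
        _ = X * Y := by rw [ihx, ihy]

open Classical in
include hgen in
theorem chiL_exists (K : Type*) [Field K] (p₀ : (cC M).Quotient) :
    ∃ F : (cC M).Quotient →* K, ∀ p, F p = if p₀ * p = p₀ then 1 else 0 := by
  refine ⟨⟨⟨fun p => if p₀ * p = p₀ then 1 else 0, if_pos (mul_one p₀)⟩, ?_⟩, fun p => rfl⟩
  intro p q
  show (if p₀ * (p * q) = p₀ then (1:K) else 0)
      = (if p₀ * p = p₀ then (1:K) else 0) * (if p₀ * q = p₀ then (1:K) else 0)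
  by_cases hpq : p₀ * (p * q) = p₀
  · have hp : p₀ * p = p₀ := by
      have h2 : p₀ * (p * q) * p = p₀ * p := by rw [hpq]
      rw [mul_assoc, mul_assoc, L_comm q p, ← mul_assoc p p q, L_idem hgen p, hpq] at h2
      exact h2.symm
    have hq : p₀ * q = p₀ := by
      have h2 : p₀ * (p * q) * q = p₀ * q := by rw [hpq]
      rw [mul_assoc, mul_assoc, L_idem hgen q, hpq] at h2
      exact h2.symm
    rw [if_pos hpq, if_pos hp, if_pos hq, mul_one]
  · rw [if_neg hpq]
    by_cases hp : p₀ * p = p₀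
    · by_cases hq : p₀ * q = p₀
      · exfalso
        apply hpq
        rw [← mul_assoc, hp, hq]
      · rw [if_neg hq, mul_zero]
    · rw [if_neg hp, zero_mul]

open Classical in
include hgen in
theorem jacobson_le_D {K : Type*} [Field K] {a : MonoidAlgebra K M}
    (ha : a ∈ Ideal.jacobson (⊥ : Ideal (MonoidAlgebra K M))) : a ∈ D K M := by
  haveI : Finite (cC M).Quotient := Finite.of_surjective _ (Con.mk'_surjective (c := cC M))
  set π := (cC M).mk' with hπ
  have hker : ∀ p₀ : (cC M).Quotient, ∃ F : (cC M).Quotient →* K,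
      (∀ p, F p = if p₀ * p = p₀ then 1 else 0) ∧
      MonoidAlgebra.lift K K ((cC M).Quotient) F
        (MonoidAlgebra.mapDomainAlgHom K K π a) = 0 := by
    intro p₀
    obtain ⟨F, hF⟩ := chiL_exists hgen K p₀
    refine ⟨F, hF, ?_⟩
    set ψ := (MonoidAlgebra.lift K K ((cC M).Quotient) F).comp
      (MonoidAlgebra.mapDomainAlgHom K K π) with hψ
    have hsurj : Function.Surjective ψ := fun k => ⟨algebraMap K _ k, by
      simpa using ψ.commutes k⟩
    have hmax : (RingHom.ker ψ).IsMaximal := RingHom.ker_isMaximal_of_surjective ψ hsurj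
    have hmem : a ∈ RingHom.ker ψ := by
      have hle : Ideal.jacobson (⊥ : Ideal (MonoidAlgebra K M)) ≤ RingHom.ker ψ := by
        rw [Ideal.jacobson]
        exact sInf_le ⟨bot_le, hmax⟩
      exact hle ha
    have := RingHom.mem_ker.mp hmem
    rwa [hψ, AlgHom.comp_apply] at this
  have hb : MonoidAlgebra.mapDomainAlgHom K K π a = 0 := by
    by_contra hTa
    set b := MonoidAlgebra.mapDomainAlgHom K K π a with hbdef
    set rgt : (cC M).Quotient → (cC M).Quotient → Prop :=
      fun p q => q * p = q ∧ p ≠ q with hrgt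
    haveI : IsTrans _ rgt := ⟨by
      rintro p q s ⟨h1, h2⟩ ⟨h3, h4⟩
      constructor
      · rw [← h3, mul_assoc, h1]
      · rintro rfl
        exact h2 (by rw [← h3, L_comm p q, h1])⟩
    haveI : IsIrrefl _ rgt := ⟨fun p h => h.2 rfl⟩
    have wf : WellFounded rgt := Finite.wellFounded_of_trans_of_irrefl rgt
    have hne : (↑b.coeff.support : Set (cC M).Quotient).Nonempty := by
      obtain ⟨x, hx⟩ := (Finsupp.support_nonempty_iff (f := b.coeff)).mpr (by simpa using hTa)
      exact ⟨x, hx⟩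
    obtain ⟨p₀, hp₀s, hmin⟩ := wf.has_min _ hne
    obtain ⟨F, hF, hlift⟩ := hker p₀
    rw [MonoidAlgebra.lift_apply, Finsupp.sum] at hlift
    have hsum : ∑ ℓ ∈ b.coeff.support, b.coeff ℓ • F ℓ = b.coeff p₀ := by
      rw [Finset.sum_eq_single p₀]
      · rw [hF, if_pos (L_idem hgen p₀), smul_eq_mul, mul_one]
      · intro ℓ hℓ hne'
        by_cases hc : p₀ * ℓ = p₀
        · exact absurd ⟨hc, hne'⟩ (hmin ℓ hℓ)
        · rw [hF, if_neg hc, smul_zero]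
      · intro h
        exact absurd hp₀s h
    rw [hsum] at hlift
    exact Finsupp.mem_support_iff.mp hp₀s hlift
  have hTa0 : MonoidAlgebra.mapDomain (⇑π) a = 0 := hb
  choose σ hσ using Con.mk'_surjective (c := cC M)
  have hkey : ∀ v : MonoidAlgebra K M,
      v - MonoidAlgebra.mapDomain (σ ∘ ⇑π) v ∈ D K M := by
    intro v
    induction v using MonoidAlgebra.induction with
    | zero =>
        rw [MonoidAlgebra.mapDomain_zero, sub_zero]
        exact (D K M).zero_mem
    | single_add m k rest hm hk ih =>
        rw [MonoidAlgebra.mapDomain_add, MonoidAlgebra.mapDomain_single]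
        have hsplit : (MonoidAlgebra.single m k + rest : MonoidAlgebra K M) -
            (MonoidAlgebra.single ((σ ∘ ⇑π) m) k +
              MonoidAlgebra.mapDomain (σ ∘ ⇑π) rest)
            = (MonoidAlgebra.single m k
                - MonoidAlgebra.single ((σ ∘ ⇑π) m) k) +
              (rest - MonoidAlgebra.mapDomain (σ ∘ ⇑π) rest) := by
          abel
        rw [hsplit]
        refine (D K M).add_mem ?_ ih
        show (MonoidAlgebra.single m k - MonoidAlgebra.single ((σ ∘ ⇑π) m) k :
          MonoidAlgebra K M) ∈ D K M
        have hsingle : (MonoidAlgebra.single m k : MonoidAlgebra K M)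
            - MonoidAlgebra.single ((σ ∘ ⇑π) m) k
            = k • (of K M m - of K M ((σ ∘ ⇑π) m)) := by
          rw [smul_sub]
          simp [MonoidAlgebra.of_apply, MonoidAlgebra.smul_single]
        rw [hsingle]
        refine (D K M).smul_mem k (of_mem_D ?_)
        exact (Con.eq _).mp (hσ (π m)).symm
  have := hkey a
  rw [show MonoidAlgebra.mapDomain (σ ∘ ⇑π) a
      = MonoidAlgebra.mapDomain σ (MonoidAlgebra.mapDomain (⇑π) a) from
      congrArg MonoidAlgebra.ofCoeff Finsupp.mapDomain_comp,
    hTa0, MonoidAlgebra.mapDomain_zero, sub_zero] at this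
  exact this

end Quot

end JTriv

/-- Let `K` be a field and `M` a finite `J`-trivial monoid generated by its idempotents.
Then the Jacobson radical of `K[M]` equals the two-sided ideal generated by the commutators
`g * h - h * g` for `g, h ∈ M`. -/
theorem radical_eq_commutator_ideal (K : Type*) [Field K] {M : Type*} [Monoid M]
    [Fintype M] (hJ : JTrivial M)
    (hgen : Submonoid.closure {e : M | IsIdempotentElem e} = ⊤) :
    ∀ a : MonoidAlgebra K M,
      a ∈ Ideal.jacobson (⊥ : Ideal (MonoidAlgebra K M)) ↔
      a ∈ TwoSidedIdeal.span {z : MonoidAlgebra K M | ∃ g h : M,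
        z = MonoidAlgebra.of K M g * MonoidAlgebra.of K M h
          - MonoidAlgebra.of K M h * MonoidAlgebra.of K M g} := by
  intro a
  constructor
  · intro ha
    exact JTriv.D_le_C (JTriv.jacobson_le_D hgen ha)
  · intro ha
    exact JTriv.C_le_jacobson hJ ha
end

section
/- Let K be a field, A a finite-dimensional K-algebra, and x ∈ A such that x² − x lies in the Jacobson radical of A. Then there exists a polynomial P ∈ ℤ[X] with zero constant term such that y := P(x) (evaluated in A, with integer coefficients acting through the canonical ring map ℤ → A) satisfies y² = y and y − x lies in the Jacobson radical of A. Moreover, P can be chosen depending only on the dimension of A over K (and not on x or A). -/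
open Polynomial

private noncomputable def idemPoly : ℕ → Polynomial ℤ
  | 0 => X
  | k+1 => (3*X^2 - 2*X^3 : Polynomial ℤ).comp (idemPoly k)

private lemma idemPoly_eval0 (k : ℕ) : (idemPoly k).eval 0 = 0 := by
  induction k with
  | zero => simp [idemPoly]
  | succ k ih => simp [idemPoly, eval_comp, ih]

private lemma idemPoly_dvdB (k : ℕ) : (X^2 - X : Polynomial ℤ) ∣ (idemPoly k - X) := by
  induction k with
  | zero => simp [idemPoly]
  | succ k ih =>
    have hB' : (X^2 - X : Polynomial ℤ) ∣ (idemPoly k)^2 - idemPoly k := by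
      have h : (idemPoly k)^2 - idemPoly k
          = (idemPoly k - X) * (idemPoly k + X - 1) + (X^2 - X) := by ring
      rw [h]
      exact dvd_add (ih.mul_right _) dvd_rfl
    have hcomp : idemPoly (k+1) - idemPoly k
        = ((idemPoly k)^2 - idemPoly k) * ((1 - 2*X : Polynomial ℤ).comp (idemPoly k)) := by
      show (3*X^2 - 2*X^3 : Polynomial ℤ).comp (idemPoly k) - idemPoly k = _
      have h : (3*X^2 - 2*X^3 : Polynomial ℤ) - X = (X^2 - X) * (1 - 2*X) := by ring
      calc (3*X^2 - 2*X^3 : Polynomial ℤ).comp (idemPoly k) - idemPoly k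
          = ((3*X^2 - 2*X^3 : Polynomial ℤ) - X).comp (idemPoly k) := by
            simp [sub_comp]
        _ = _ := by rw [h]; simp [mul_comp, sub_comp, pow_comp]
    have : idemPoly (k+1) - X = (idemPoly (k+1) - idemPoly k) + (idemPoly k - X) := by ring
    rw [this, hcomp]
    exact dvd_add (hB'.mul_right _) ih

private lemma idemPoly_dvdC (k : ℕ) :
    (X^2 - X : Polynomial ℤ)^(2^k) ∣ (idemPoly k)^2 - idemPoly k := by
  induction k with
  | zero => simp [idemPoly]
  | succ k ih =>
    have hq : ((3*X^2 - 2*X^3 : Polynomial ℤ))^2 - (3*X^2 - 2*X^3)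
        = (X^2 - X)^2 * (4*X^2 - 4*X - 3) := by ring
    have hcomp : (idemPoly (k+1))^2 - idemPoly (k+1)
        = ((idemPoly k)^2 - idemPoly k)^2 * ((4*X^2 - 4*X - 3 : Polynomial ℤ).comp (idemPoly k)) := by
      show ((3*X^2 - 2*X^3 : Polynomial ℤ).comp (idemPoly k))^2
          - (3*X^2 - 2*X^3 : Polynomial ℤ).comp (idemPoly k) = _
      calc ((3*X^2 - 2*X^3 : Polynomial ℤ).comp (idemPoly k))^2
          - (3*X^2 - 2*X^3 : Polynomial ℤ).comp (idemPoly k)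
          = (((3*X^2 - 2*X^3 : Polynomial ℤ))^2 - (3*X^2 - 2*X^3)).comp (idemPoly k) := by
            simp [sub_comp, pow_comp]
        _ = _ := by rw [hq]; simp [mul_comp, sub_comp, pow_comp]
    have h2 : (X^2 - X : Polynomial ℤ)^(2^(k+1)) = ((X^2-X)^(2^k))^2 := by
      rw [show (2:ℕ)^(k+1) = 2^k*2 from pow_succ 2 k, pow_mul]
    rw [hcomp, h2]
    exact (pow_dvd_pow_of_dvd ih 2).mul_right _

private lemma pow_finrank_jacobson_eq_zero {K A : Type*} [Field K] [Ring A] [Algebra K A]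
    [FiniteDimensional K A] {z : A} (hz : z ∈ Ideal.jacobson (⊥ : Ideal A)) :
    z ^ (Module.finrank K A) = 0 := by
  set n := Module.finrank K A with hn
  by_cases h : ∃ m, m < n ∧ z ^ m ∈ Ideal.span {z ^ (m+1)}
  · obtain ⟨m, hmn, hmem⟩ := h
    obtain ⟨c, hc⟩ := Submodule.mem_span_singleton.mp hmem
    rw [smul_eq_mul] at hc
    have hcz : c * z ∈ Ideal.jacobson (⊥ : Ideal A) :=
      Ideal.mul_mem_left _ c hz
    obtain ⟨u, hu⟩ := Ideal.mem_jacobson_iff.mp hcz (-1)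
    rw [Ideal.mem_bot] at hu
    have hu' : u * (1 - c * z) = 1 := by
      have := sub_eq_zero.mp hu
      -- u * -1 * (c*z) + u = 1
      calc u * (1 - c*z) = u * (-1) * (c*z) + u := by noncomm_ring
        _ = 1 := this
    have hzm : z ^ m = 0 := by
      have h1 : (1 - c * z) * z ^ m = 0 := by
        have : c * z * z ^ m = z ^ m := by
          rw [mul_assoc, ← pow_succ', hc]
        rw [sub_mul, one_mul, this, sub_self]
      calc z ^ m = (u * (1 - c*z)) * z ^ m := by rw [hu', one_mul]
        _ = u * ((1 - c*z) * z ^ m) := by rw [mul_assoc]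
        _ = 0 := by rw [h1, mul_zero]
    calc z ^ n = z ^ m * z ^ (n - m) := by rw [← pow_add, Nat.add_sub_cancel' hmn.le]
      _ = 0 := by rw [hzm, zero_mul]
  · push_neg at h
    set N : ℕ → Submodule K A := fun k => (Ideal.span {z ^ k}).restrictScalars K with hN
    have key : ∀ m, m ≤ n → Module.finrank K (N m) + m ≤ n := by
      intro m
      induction m with
      | zero => intro _; simpa using Submodule.finrank_le (N 0)
      | succ m ih =>
        intro hm
        have hlt : N (m+1) < N m := by
          refine lt_of_le_of_ne ?_ ?_
          · have hle : Ideal.span {z ^ (m+1)} ≤ Ideal.span {z ^ m} := by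
              rw [Ideal.span_le, Set.singleton_subset_iff]
              have hzz : z ^ (m+1) = z * z ^ m := by rw [pow_succ']
              rw [hzz]
              exact Ideal.mul_mem_left _ z (Ideal.subset_span rfl)
            exact fun a ha => hle ha
          · intro heq
            have : z ^ m ∈ Ideal.span {z ^ (m+1)} := by
              have hmm : z ^ m ∈ N m := Ideal.subset_span rfl
              rw [← heq] at hmm
              exact hmm
            exact h m (lt_of_lt_of_le (Nat.lt_succ_self m) hm) this
        have hf := Submodule.finrank_lt_finrank_of_lt hlt
        have := ih (le_trans (Nat.le_succ m) hm)
        omega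
    have h0 : Module.finrank K (N n) = 0 := by
      have := key n le_rfl; omega
    have hbot : N n = ⊥ := Submodule.finrank_eq_zero.mp h0
    have : z ^ n ∈ N n := Ideal.subset_span rfl
    rw [hbot] at this
    simpa using this

/-- Let `K` be a field.  For every `n` there is a polynomial `P ∈ ℤ[X]` with zero constant
term (depending only on `n`) such that, for every finite-dimensional `K`-algebra `A` of
dimension `n` and every `x ∈ A` whose image in `A/rad A` is idempotent (i.e. `x² - x ∈ rad A`),
the element `y = P(x)` is idempotent and has the same image as `x` modulo the radical. -/
theorem exists_idempotent_lifting_polynomial (K : Type*) [Field K] (n : ℕ) :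
    ∃ P : Polynomial ℤ, P.coeff 0 = 0 ∧
      ∀ (A : Type*) [Ring A] [Algebra K A] [FiniteDimensional K A],
        Module.finrank K A = n →
        ∀ x : A, x ^ 2 - x ∈ Ideal.jacobson (⊥ : Ideal A) →
          IsIdempotentElem (Polynomial.aeval x P) ∧
          Polynomial.aeval x P - x ∈ Ideal.jacobson (⊥ : Ideal A) := by
  refine ⟨idemPoly n, by rw [coeff_zero_eq_eval_zero]; exact idemPoly_eval0 n, ?_⟩
  intro A _ _ _ hfin x hx
  set y := Polynomial.aeval x (idemPoly n) with hy
  have hzpow : (x^2 - x) ^ (2^n) = 0 := by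
    have hzn : (x^2 - x) ^ n = 0 := by
      rw [← hfin]; exact pow_finrank_jacobson_eq_zero hx
    calc (x^2-x)^(2^n) = (x^2-x)^n * (x^2-x)^(2^n - n) := by
          rw [← pow_add, Nat.add_sub_cancel' (Nat.le_of_lt (Nat.lt_two_pow_self (n := n)))]
      _ = 0 := by rw [hzn, zero_mul]
  constructor
  · obtain ⟨t, ht⟩ := idemPoly_dvdC n
    rw [mul_comm] at ht
    have := congrArg (Polynomial.aeval x) ht
    simp only [map_sub, map_mul, map_pow, Polynomial.aeval_X] at this
    rw [hzpow, mul_zero] at this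
    have hyy : y * y = y := by
      have := sub_eq_zero.mp this
      rw [pow_two] at this
      exact this
    exact hyy
  · obtain ⟨s, hs⟩ := idemPoly_dvdB n
    rw [mul_comm] at hs
    have := congrArg (Polynomial.aeval x) hs
    simp only [map_sub, map_mul, map_pow, Polynomial.aeval_X] at this
    rw [this]
    exact Ideal.mul_mem_left _ _ hx
end

section
/- Let K be a field and M a finite J-trivial monoid with set of idempotents E(M). Let (g_e)_{e ∈ E(M)} be the unique family of elements of the K-span of E(M) inside MonoidAlgebra K M satisfying e = Σ_{e' ∈ E(M), e' ≤_J e} g_{e'} for all e ∈ E(M). Then there exists a family (f_e)_{e ∈ E(M)} of elements of MonoidAlgebra K M such that: (i) Σ_{e ∈ E(M)} f_e = 1 and f_e · f_{e'} = f_e if e = e' and 0 otherwise (a decomposition of the identity into orthogonal idempotents); (ii) f_e − g_e lies in the Jacobson radical of MonoidAlgebra K M for every e ∈ E(M); (iii) f_e is uni-triangular with respect to ≤_J: f_e − e lies in the K-span of {x ∈ M : x <_J e}. -/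
open Classical

namespace JTProofAux

open scoped Pointwise

variable {M : Type*} [Monoid M]

theorem leJ_refl (x : M) : leJ x x := ⟨1, 1, by rw [one_mul, mul_one]⟩

theorem leJ_trans {x y z : M} (h1 : leJ x y) (h2 : leJ y z) : leJ x z := by
  obtain ⟨u, v, rfl⟩ := h1
  obtain ⟨a, b, rfl⟩ := h2
  exact ⟨u * a, b * v, by simp only [mul_assoc]⟩

theorem leJ_mul_left (x y : M) : leJ (x * y) x := ⟨1, y, by rw [one_mul]⟩

theorem leJ_mul_right (x y : M) : leJ (x * y) y := ⟨x, 1, by rw [mul_one]⟩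

theorem leJ_one (x : M) : leJ x 1 := ⟨x, 1, by rw [mul_one, mul_one]⟩

theorem leJ_antisymm (hJ : JTrivial M) {x y : M} (h1 : leJ x y) (h2 : leJ y x) : x = y := by
  apply hJ
  ext z
  simp only [Set.mem_setOf_eq]
  constructor
  · rintro ⟨u, v, rfl⟩
    obtain ⟨a, b, hab⟩ := h1
    exact ⟨u * a, b * v, by rw [hab]; simp only [mul_assoc]⟩
  · rintro ⟨u, v, rfl⟩
    obtain ⟨a, b, hab⟩ := h2
    exact ⟨u * a, b * v, by rw [hab]; simp only [mul_assoc]⟩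

theorem eq_one_of_one_leJ (hJ : JTrivial M) {y : M} (h : leJ 1 y) : y = 1 :=
  leJ_antisymm hJ (leJ_one y) h

theorem mul_eq_of_sandwich (hJ : JTrivial M) {z m : M} (h : z * m * z = z) : z * m = z :=
  leJ_antisymm hJ (leJ_mul_left z m) ⟨1, z, by rw [one_mul, h]⟩

theorem idem_of_sandwich (hJ : JTrivial M) {z m : M} (h : z * m * z = z) : z * z = z := by
  have h2 := mul_eq_of_sandwich hJ h
  calc z * z = z * m * z := by rw [h2]
    _ = z := h

theorem sandwich_iff (hJ : JTrivial M) {z m : M} (hz : z * z = z) :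
    z * m * z = z ↔ m * z = z := by
  constructor
  · intro h
    refine leJ_antisymm hJ (leJ_mul_right m z) ⟨z, 1, ?_⟩
    rw [mul_one, ← mul_assoc, h]
  · intro h
    rw [mul_assoc, h, hz]

theorem lemA_right (hJ : JTrivial M) {e a b : M} (he : e * e = e) (h : e = a * b) :
    b * e = e :=
  leJ_antisymm hJ (leJ_mul_right b e) ⟨a, 1, by rw [mul_one, ← mul_assoc, ← h, he]⟩

theorem lemA_left (hJ : JTrivial M) {e a b : M} (he : e * e = e) (h : e = a * b) :
    e * a = e :=
  leJ_antisymm hJ (leJ_mul_left e a) ⟨1, b, by rw [one_mul, mul_assoc, ← h, he]⟩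

theorem lemB_left (hJ : JTrivial M) {e x u v : M} (he : e * e = e) (h : e = u * x * v) :
    x * e = e := by
  have hv : v * e = e := lemA_right hJ he h
  have hxv : x * v * e = e := lemA_right hJ he (by rw [h, mul_assoc])
  calc x * e = x * (v * e) := by rw [hv]
    _ = x * v * e := by rw [mul_assoc]
    _ = e := hxv

theorem mul_idem_iff_leJ (hJ : JTrivial M) {e x : M} (he : e * e = e) :
    x * e = e ↔ leJ e x := by
  constructor
  · intro h
    exact ⟨1, e, by rw [one_mul, h]⟩
  · rintro ⟨u, v, h⟩
    exact lemB_left hJ he h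

theorem mul_fix_iff (hJ : JTrivial M) {e x y : M} :
    x * y * e = e ↔ (x * e = e ∧ y * e = e) := by
  constructor
  · intro h
    have hy : y * e = e :=
      leJ_antisymm hJ (leJ_mul_right y e) ⟨x, 1, by rw [mul_one, ← mul_assoc, h]⟩
    have hx : x * e = e := by
      calc x * e = x * (y * e) := by rw [hy]
        _ = x * y * e := by rw [mul_assoc]
        _ = e := h
    exact ⟨hx, hy⟩
  · rintro ⟨hx, hy⟩
    rw [mul_assoc, hy, hx]

section Algebra

variable (K : Type*) [Field K]

/-- The type of idempotents. -/
abbrev Et (M : Type*) [Monoid M] := {e : M // IsIdempotentElem e}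

/-- The character of `M` attached to an idempotent `e`. -/
noncomputable def chi (hJ : JTrivial M) (e : Et M) : M →* K where
  toFun m := if m * e.1 = e.1 then 1 else 0
  map_one' := by
    show (if (1 : M) * e.1 = e.1 then (1 : K) else 0) = 1
    rw [if_pos (one_mul e.1)]
  map_mul' x y := by
    show (if (x * y) * e.1 = e.1 then (1 : K) else 0)
      = (if x * e.1 = e.1 then (1 : K) else 0) * (if y * e.1 = e.1 then (1 : K) else 0)
    by_cases hx : x * e.1 = e.1 <;> by_cases hy : y * e.1 = e.1
    · rw [if_pos hx, if_pos hy, if_pos ((mul_fix_iff hJ).mpr ⟨hx, hy⟩), mul_one]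
    · rw [if_pos hx, if_neg hy, if_neg (fun h => hy ((mul_fix_iff hJ).mp h).2), mul_zero]
    · rw [if_neg hx, if_neg (fun h => hx ((mul_fix_iff hJ).mp h).1), zero_mul]
    · rw [if_neg hx, if_neg (fun h => hx ((mul_fix_iff hJ).mp h).1), zero_mul]

/-- The character extended to the monoid algebra. -/
noncomputable def phi (hJ : JTrivial M) (e : Et M) : MonoidAlgebra K M →ₐ[K] K :=
  MonoidAlgebra.lift K K M (chi K hJ e)

theorem phi_of (hJ : JTrivial M) (e : Et M) (m : M) :
    phi K hJ e (MonoidAlgebra.of K M m) = if m * e.1 = e.1 then 1 else 0 :=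
  MonoidAlgebra.lift_of _ _

theorem phi_apply (hJ : JTrivial M) (e : Et M) (u : MonoidAlgebra K M) :
    phi K hJ e u = ∑ m ∈ u.coeff.support, (if m * e.1 = e.1 then u.coeff m else 0) := by
  rw [phi, MonoidAlgebra.lift_apply, Finsupp.sum]
  refine Finset.sum_congr rfl fun m _ => ?_
  show u.coeff m • (if m * e.1 = e.1 then (1 : K) else 0) = _
  split_ifs <;> simp

/-- Span of (the image of) a subset of the monoid. -/
noncomputable def spanS (D : Set M) : Submodule K (MonoidAlgebra K M) :=
  Submodule.span K ((fun z : M => (MonoidAlgebra.of K M z : MonoidAlgebra K M)) '' D)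

theorem of_mem_spanS {D : Set M} {z : M} (hz : z ∈ D) :
    MonoidAlgebra.of K M z ∈ spanS K D :=
  Submodule.subset_span ⟨z, hz, rfl⟩

theorem spanS_mono {D D' : Set M} (h : D ⊆ D') : spanS K D ≤ spanS K D' :=
  Submodule.span_mono (Set.image_mono h)

theorem mem_spanS {D : Set M} {w : MonoidAlgebra K M} (h : ∀ z, w.coeff z ≠ 0 → z ∈ D) :
    w ∈ spanS K D := by
  rw [← MonoidAlgebra.sum_coeff_single w, Finsupp.sum]
  apply Submodule.sum_mem
  intro z hz
  have h1 : MonoidAlgebra.single z (w.coeff z) = (w.coeff z) • (MonoidAlgebra.of K M z) := by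
    rw [MonoidAlgebra.of_apply, MonoidAlgebra.smul_single', mul_one]
  rw [h1]
  exact Submodule.smul_mem _ _ (of_mem_spanS K (h z (Finsupp.mem_support_iff.mp hz)))

theorem threeMul (x y : M) (b : MonoidAlgebra K M) :
    MonoidAlgebra.of K M x * b * MonoidAlgebra.of K M y
      = b.coeff.sum fun m c => MonoidAlgebra.single (x * m * y) c := by
  induction b using MonoidAlgebra.induction_linear with
  | zero => simp
  | add f g hf hg =>
      rw [mul_add, add_mul, hf, hg, MonoidAlgebra.coeff_add,
        Finsupp.sum_add_index' (fun m => by simp) (fun m c₁ c₂ => MonoidAlgebra.single_add _ _ _)]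
  | single a c =>
      rw [MonoidAlgebra.coeff_single, Finsupp.sum_single_index (by simp)]
      rw [MonoidAlgebra.of_apply, MonoidAlgebra.of_apply]
      rw [MonoidAlgebra.single_mul_single, MonoidAlgebra.single_mul_single, one_mul, mul_one]

theorem coef3 (x y : M) (b : MonoidAlgebra K M) (z : M) :
    (MonoidAlgebra.of K M x * b * MonoidAlgebra.of K M y).coeff z
      = ∑ m ∈ b.coeff.support, (if x * m * y = z then b.coeff m else 0) := by
  rw [threeMul, MonoidAlgebra.coeff_finsuppSum, Finsupp.sum_apply, Finsupp.sum]
  refine Finset.sum_congr rfl fun m _ => ?_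
  rw [MonoidAlgebra.coeff_single, Finsupp.single_apply]

theorem spanS_mul_right {D : Set M} (hD : ∀ z w, leJ z w → w ∈ D → z ∈ D)
    {a : MonoidAlgebra K M} (ha : a ∈ spanS K D) (b : MonoidAlgebra K M) :
    a * b ∈ spanS K D := by
  induction ha using Submodule.span_induction with
  | mem w hw =>
      obtain ⟨x, hx, rfl⟩ := hw
      have h1 : MonoidAlgebra.of K M x * b
          = MonoidAlgebra.of K M x * b * MonoidAlgebra.of K M 1 := by
        rw [map_one, mul_one]
      rw [h1]
      apply mem_spanS
      intro z hz
      rw [coef3] at hz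
      obtain ⟨m, _, hm⟩ := Finset.exists_ne_zero_of_sum_ne_zero hz
      have hzx : x * m * 1 = z := by by_contra hne; rw [if_neg hne] at hm; exact hm rfl
      refine hD z x ?_ hx
      rw [← hzx, mul_one]
      exact leJ_mul_left x m
  | zero => rw [zero_mul]; exact Submodule.zero_mem _
  | add u v _ _ hu hv => rw [add_mul]; exact Submodule.add_mem _ hu hv
  | smul c u _ hu => rw [smul_mul_assoc]; exact Submodule.smul_mem _ _ hu

theorem spanS_mul_left {D : Set M} (hD : ∀ z w, leJ z w → w ∈ D → z ∈ D)
    {a : MonoidAlgebra K M} (ha : a ∈ spanS K D) (b : MonoidAlgebra K M) :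
    b * a ∈ spanS K D := by
  induction ha using Submodule.span_induction with
  | mem w hw =>
      obtain ⟨x, hx, rfl⟩ := hw
      have h1 : b * MonoidAlgebra.of K M x
          = MonoidAlgebra.of K M 1 * b * MonoidAlgebra.of K M x := by
        rw [map_one, one_mul]
      rw [h1]
      apply mem_spanS
      intro z hz
      rw [coef3] at hz
      obtain ⟨m, _, hm⟩ := Finset.exists_ne_zero_of_sum_ne_zero hz
      have hzx : 1 * m * x = z := by by_contra hne; rw [if_neg hne] at hm; exact hm rfl
      refine hD z x ?_ hx
      rw [← hzx, one_mul]
      exact leJ_mul_right m x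
  | zero => rw [mul_zero]; exact Submodule.zero_mem _
  | add u v _ _ hu hv => rw [mul_add]; exact Submodule.add_mem _ hu hv
  | smul c u _ hu => rw [mul_smul_comm]; exact Submodule.smul_mem _ _ hu

theorem downclosed_strict (hJ : JTrivial M) (e : M) :
    ∀ z w, leJ z w → w ∈ {x : M | leJ x e ∧ x ≠ e} → z ∈ {x : M | leJ x e ∧ x ≠ e} := by
  rintro z w hzw ⟨hwe, hne⟩
  refine ⟨leJ_trans hzw hwe, ?_⟩
  rintro rfl
  exact hne (leJ_antisymm hJ hwe hzw)

theorem step_core (hJ : JTrivial M) {D : Finset M}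
    (hD : ∀ z w, leJ z w → w ∈ D → z ∈ D)
    {u : MonoidAlgebra K M} (hu : ∀ e : Et M, phi K hJ e u = 0)
    {x y : M} (hx : x ∈ D) (hy : y ∈ D) :
    MonoidAlgebra.of K M x * u * MonoidAlgebra.of K M y
      ∈ spanS K ↑(D.filter fun z => ∃ w ∈ D, leJ z w ∧ z ≠ w) := by
  apply mem_spanS
  intro z hz
  rw [coef3] at hz
  obtain ⟨m, _, hm⟩ := Finset.exists_ne_zero_of_sum_ne_zero hz
  have h1 : x * m * y = z := by by_contra hne; rw [if_neg hne] at hm; exact hm rfl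
  have hzx : leJ z x := by
    rw [← h1]; exact leJ_trans (leJ_mul_left _ _) (leJ_mul_left x m)
  have hzD : z ∈ D := hD z x hzx hx
  refine Finset.mem_coe.mpr (Finset.mem_filter.mpr ⟨hzD, ?_⟩)
  by_contra hmax
  push_neg at hmax
  have hxz : x = z := (hmax x hx hzx).symm
  have hyz : y = z := (hmax y hy (by rw [← h1]; exact leJ_mul_right (x*m) y)).symm
  rw [hxz, hyz] at hz
  by_cases hidem : z * z = z
  · apply hz
    have heq : (∑ m ∈ u.coeff.support, if z * m * z = z then u.coeff m else 0)
        = phi K hJ ⟨z, hidem⟩ u := by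
      rw [phi_apply]
      refine Finset.sum_congr rfl fun m _ => ?_
      exact if_congr (sandwich_iff hJ hidem) rfl rfl
    rw [heq, hu ⟨z, hidem⟩]
  · apply hz
    apply Finset.sum_eq_zero
    intro m _
    rw [if_neg]
    intro hzmz
    exact hidem (idem_of_sandwich hJ hzmz)

theorem step_span (hJ : JTrivial M) {D : Finset M}
    (hD : ∀ z w, leJ z w → w ∈ D → z ∈ D)
    {u : MonoidAlgebra K M} (hu : ∀ e : Et M, phi K hJ e u = 0)
    {a b : MonoidAlgebra K M} (ha : a ∈ spanS K ↑D) (hb : b ∈ spanS K ↑D) :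
    a * u * b ∈ spanS K ↑(D.filter fun z => ∃ w ∈ D, leJ z w ∧ z ≠ w) := by
  induction ha using Submodule.span_induction with
  | mem w hw =>
    obtain ⟨x, hx, rfl⟩ := hw
    induction hb using Submodule.span_induction with
    | mem w' hw' =>
      obtain ⟨y, hy, rfl⟩ := hw'
      exact step_core K hJ hD hu (Finset.mem_coe.mp hx) (Finset.mem_coe.mp hy)
    | zero => rw [mul_zero]; exact Submodule.zero_mem _
    | add p q hp hq ihp ihq => rw [mul_add]; exact Submodule.add_mem _ ihp ihq
    | smul c p hp ihp => rw [mul_smul_comm]; exact Submodule.smul_mem _ _ ihp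
  | zero => rw [zero_mul, zero_mul]; exact Submodule.zero_mem _
  | add p q hp hq ihp ihq => rw [add_mul, add_mul]; exact Submodule.add_mem _ ihp ihq
  | smul c p hp ihp => rw [smul_mul_assoc, smul_mul_assoc]; exact Submodule.smul_mem _ _ ihp

theorem exists_maximal (hJ : JTrivial M) {α : Type*} (fv : α → M) {S : Finset α}
    (hS : S.Nonempty) : ∃ a ∈ S, ∀ b ∈ S, leJ (fv a) (fv b) → fv a = fv b := by
  obtain ⟨a, ha, hmin⟩ :=
    S.exists_min_image (fun a => (S.filter fun b => leJ (fv a) (fv b)).card) hS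
  refine ⟨a, ha, fun b hb hab => ?_⟩
  by_contra hne
  have h1 : S.filter (fun c => leJ (fv b) (fv c)) ⊆ S.filter (fun c => leJ (fv a) (fv c)) := by
    intro c hc
    rw [Finset.mem_filter] at hc ⊢
    exact ⟨hc.1, leJ_trans hab hc.2⟩
  have h2 : a ∈ S.filter (fun c => leJ (fv a) (fv c)) :=
    Finset.mem_filter.mpr ⟨ha, leJ_refl _⟩
  have h3 : a ∉ S.filter (fun c => leJ (fv b) (fv c)) := by
    rw [Finset.mem_filter]
    rintro ⟨-, hba⟩
    exact hne (leJ_antisymm hJ hab hba)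
  have hcard := Finset.card_lt_card ((Finset.ssubset_iff_of_subset h1).mpr ⟨a, h2, h3⟩)
  exact absurd (hmin b hb) (not_le.mpr hcard)

theorem nil (hJ : JTrivial M) : ∀ (k : ℕ) (D : Finset M), D.card ≤ k →
    (∀ z w, leJ z w → w ∈ D → z ∈ D) →
    ∀ u : MonoidAlgebra K M, (∀ e : Et M, phi K hJ e u = 0) → u ∈ spanS K ↑D →
    ∃ n : ℕ, u ^ (n + 1) = 0 := by
  intro k
  induction k with
  | zero =>
    intro D hcard _ u _ hu
    have hD : D = ∅ := Finset.card_eq_zero.mp (Nat.le_zero.mp hcard)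
    subst hD
    have : u = 0 := by simpa [spanS] using hu
    exact ⟨0, by rw [pow_one, this]⟩
  | succ k ih =>
    intro D hcard hD u hphi hu
    rcases Finset.eq_empty_or_nonempty D with rfl | hne
    · have : u = 0 := by simpa [spanS] using hu
      exact ⟨0, by rw [pow_one, this]⟩
    · obtain ⟨z, hzD, hzmax⟩ := exists_maximal hJ id hne
      have hD'dc : ∀ a b, leJ a b →
          b ∈ (D.filter fun x => ∃ w ∈ D, leJ x w ∧ x ≠ w) →
          a ∈ (D.filter fun x => ∃ w ∈ D, leJ x w ∧ x ≠ w) := by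
        intro a b hab hb
        rw [Finset.mem_filter] at hb ⊢
        obtain ⟨hbD, w, hwD, hbw, hbne⟩ := hb
        refine ⟨hD a b hab hbD, w, hwD, leJ_trans hab hbw, ?_⟩
        rintro rfl
        exact hbne (leJ_antisymm hJ hbw hab)
      have hcard' : (D.filter fun x => ∃ w ∈ D, leJ x w ∧ x ≠ w).card ≤ k := by
        have hzD' : z ∉ (D.filter fun x => ∃ w ∈ D, leJ x w ∧ x ≠ w) := by
          rw [Finset.mem_filter]
          rintro ⟨-, w, hw, hzw, hzne⟩
          exact hzne (hzmax w hw hzw)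
        have hsub : (D.filter fun x => ∃ w ∈ D, leJ x w ∧ x ≠ w) ⊆ D.erase z := by
          intro a haD'
          exact Finset.mem_erase.mpr
            ⟨fun h => hzD' (h ▸ haD'), (Finset.mem_filter.mp haD').1⟩
        calc (D.filter fun x => ∃ w ∈ D, leJ x w ∧ x ≠ w).card
            ≤ (D.erase z).card := Finset.card_le_card hsub
          _ = D.card - 1 := Finset.card_erase_of_mem hzD
          _ ≤ k := by
              have := Finset.card_pos.mpr hne
              omega
      have hu3 : u * u * u ∈ spanS K ↑(D.filter fun x => ∃ w ∈ D, leJ x w ∧ x ≠ w) :=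
        step_span K hJ hD hphi hu hu
      have hphi3 : ∀ e : Et M, phi K hJ e (u * u * u) = 0 := by
        intro e; rw [map_mul, map_mul, hphi e, mul_zero]
      obtain ⟨n, hn⟩ := ih _ hcard' hD'dc _ hphi3 hu3
      refine ⟨3 * n + 2, ?_⟩
      have h3 : u * u * u = u ^ 3 := by rw [pow_succ, pow_succ, pow_one]
      rw [h3] at hn
      have hexp : 3 * n + 2 + 1 = 3 * (n + 1) := by ring
      rw [hexp, pow_mul, hn]

/-- Span of the positive powers of an element. -/
noncomputable def powSpan (t : MonoidAlgebra K M) : Submodule K (MonoidAlgebra K M) :=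
  Submodule.span K (Set.range fun n : ℕ => t ^ (n + 1))

theorem powSpan_mul_mem {t a b : MonoidAlgebra K M} (ha : a ∈ powSpan K t)
    (hb : b ∈ powSpan K t) : a * b ∈ powSpan K t := by
  have hss : (Set.range fun n : ℕ => t ^ (n + 1)) * (Set.range fun n : ℕ => t ^ (n + 1))
      ⊆ (Set.range fun n : ℕ => t ^ (n + 1)) := by
    rintro _ ⟨p, ⟨i, rfl⟩, q, ⟨j, rfl⟩, rfl⟩
    refine ⟨i + j + 1, ?_⟩
    show t ^ (i + j + 1 + 1) = t ^ (i + 1) * t ^ (j + 1)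
    rw [← pow_add]
    congr 1
    ring
  have h := Submodule.mul_mem_mul ha hb
  rw [powSpan, Submodule.span_mul_span] at h
  exact Submodule.span_mono hss h

theorem pow_mem_powSpan (t : MonoidAlgebra K M) (n : ℕ) : t ^ (n + 1) ∈ powSpan K t :=
  Submodule.subset_span ⟨n, rfl⟩

theorem tprime_mem (t : MonoidAlgebra K M) : 3 * t ^ 2 - 2 * t ^ 3 ∈ powSpan K t := by
  have h2 : t ^ 2 ∈ powSpan K t := Submodule.subset_span ⟨1, rfl⟩
  have h3 : t ^ 3 ∈ powSpan K t := Submodule.subset_span ⟨2, rfl⟩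
  have e1 : 3 * t ^ 2 - 2 * t ^ 3 = (t ^ 2 + t ^ 2 + t ^ 2) - (t ^ 3 + t ^ 3) := by
    noncomm_ring
  rw [e1]
  exact sub_mem (add_mem (add_mem h2 h2) h2) (add_mem h3 h3)

theorem powSpan_le {t t' : MonoidAlgebra K M} (ht' : t' ∈ powSpan K t) :
    powSpan K t' ≤ powSpan K t := by
  rw [powSpan, Submodule.span_le]
  rintro _ ⟨n, rfl⟩
  simp only [SetLike.mem_coe]
  induction n with
  | zero => simpa using ht'
  | succ n ihn => rw [pow_succ]; exact powSpan_mul_mem K ihn ht'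

theorem lift_idem : ∀ (k : ℕ) (t : MonoidAlgebra K M), (t * t - t) ^ (k + 1) = 0 →
    ∃ f z : MonoidAlgebra K M,
      f * f = f ∧ f ∈ powSpan K t ∧ f - t = (t * t - t) * z := by
  intro k
  induction k with
  | zero =>
    intro t ht
    rw [pow_one, sub_eq_zero] at ht
    exact ⟨t, 0, ht, Submodule.subset_span ⟨0, pow_one t⟩, by rw [mul_zero, sub_self]⟩
  | succ k ih =>
    intro t ht
    have key1 : (3 * t ^ 2 - 2 * t ^ 3) * (3 * t ^ 2 - 2 * t ^ 3) - (3 * t ^ 2 - 2 * t ^ 3)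
        = (t * t - t) * ((t * t - t) * (4 * (t * t - t) - 3)) := by
      noncomm_ring
    have key2 : (3 * t ^ 2 - 2 * t ^ 3) - t = (t * t - t) * (1 - 2 * t) := by
      noncomm_ring
    have hc1 : Commute (t * t - t) ((t * t - t) * (4 * (t * t - t) - 3)) := by
      show _ = _
      noncomm_ring
    have hc2 : Commute (t * t - t) (4 * (t * t - t) - 3) := by
      show _ = _
      noncomm_ring
    have hnil' : ((3 * t ^ 2 - 2 * t ^ 3) * (3 * t ^ 2 - 2 * t ^ 3)
        - (3 * t ^ 2 - 2 * t ^ 3)) ^ (k + 1) = 0 := by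
      rw [key1, hc1.mul_pow, hc2.mul_pow, ← mul_assoc, ← pow_add]
      rw [show k + 1 + (k + 1) = (k + 1 + 1) + k by ring, pow_add, ht, zero_mul, zero_mul]
    obtain ⟨f, z', hfidem, hfmem, hfsub⟩ := ih (3 * t ^ 2 - 2 * t ^ 3) hnil'
    refine ⟨f, ((t * t - t) * (4 * (t * t - t) - 3)) * z' + (1 - 2 * t), hfidem,
      powSpan_le K (tprime_mem K t) hfmem, ?_⟩
    calc f - t = (f - (3 * t ^ 2 - 2 * t ^ 3)) + ((3 * t ^ 2 - 2 * t ^ 3) - t) :=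
          (sub_add_sub_cancel _ _ _).symm
      _ = (t * t - t) * ((t * t - t) * (4 * (t * t - t) - 3)) * z'
            + (t * t - t) * (1 - 2 * t) := by rw [hfsub, key1, key2]
      _ = (t * t - t) * (((t * t - t) * (4 * (t * t - t) - 3)) * z' + (1 - 2 * t)) := by
          rw [mul_add, mul_assoc]

section Build

variable [Fintype M]

theorem build (hJ : JTrivial M) :
    ∀ (N : ℕ) (S : Finset (Et M)), S.card ≤ N →
    (∀ a b : Et M, leJ a.1 b.1 → b ∈ S → a ∈ S) →
    ∃ f : Et M → MonoidAlgebra K M,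
      (∀ e ∈ S, ∀ e' ∈ S, f e * f e' = if e = e' then f e else 0) ∧
      (∀ e ∈ S, f e - MonoidAlgebra.of K M e.1 ∈ spanS K {x | leJ x e.1 ∧ x ≠ e.1}) ∧
      (∀ e ∈ S, ∀ e'' : Et M, phi K hJ e'' (f e) = if e'' = e then 1 else 0) := by
  intro N
  induction N with
  | zero =>
    intro S hcard _
    have hS : S = ∅ := Finset.card_eq_zero.mp (Nat.le_zero.mp hcard)
    subst hS
    exact ⟨fun _ => 0, by simp, by simp, by simp⟩
  | succ N ih =>
    intro S hcard hdc
    rcases Finset.eq_empty_or_nonempty S with rfl | hne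
    · exact ⟨fun _ => 0, by simp, by simp, by simp⟩
    obtain ⟨estar, hestar, hmax⟩ := exists_maximal hJ (fun e : Et M => e.1) hne
    have hdc' : ∀ a b : Et M, leJ a.1 b.1 → b ∈ S.erase estar → a ∈ S.erase estar := by
      intro a b hab hb
      have hbS := Finset.mem_of_mem_erase hb
      refine Finset.mem_erase.mpr ⟨?_, hdc a b hab hbS⟩
      rintro rfl
      exact (Finset.ne_of_mem_erase hb) (Subtype.ext (hmax b hbS hab)).symm
    have hcard' : (S.erase estar).card ≤ N := by
      rw [Finset.card_erase_of_mem hestar]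
      have := Finset.card_pos.mpr hne
      omega
    obtain ⟨f', horth, htri, hph⟩ := ih (S.erase estar) hcard' hdc'
    -- abbreviations
    set S' := S.erase estar with hS'
    set E1 := MonoidAlgebra.of K M estar.1 with hE1
    set s := ∑ e ∈ S', f' e with hs
    have hestarS' : estar ∉ S' := Finset.notMem_erase estar S
    have hsf : ∀ e ∈ S', s * f' e = f' e ∧ f' e * s = f' e := by
      intro e he
      constructor
      · calc s * f' e = (∑ e' ∈ S', f' e') * f' e := by rw [← hs]
          _ = ∑ e' ∈ S', f' e' * f' e := Finset.sum_mul _ _ _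
          _ = ∑ e' ∈ S', if e' = e then f' e' else 0 :=
              Finset.sum_congr rfl (fun e' he' => horth e' he' e he)
          _ = if e ∈ S' then f' e else 0 := Finset.sum_ite_eq' S' e (fun e' => f' e')
          _ = f' e := if_pos he
      · calc f' e * s = f' e * (∑ e' ∈ S', f' e') := by rw [← hs]
          _ = ∑ e' ∈ S', f' e * f' e' := Finset.mul_sum _ _ _
          _ = ∑ e' ∈ S', if e = e' then f' e else 0 :=
              Finset.sum_congr rfl (fun e' he' => horth e he e' he')
          _ = if e ∈ S' then f' e else 0 := Finset.sum_ite_eq S' e (fun _ => f' e)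
          _ = f' e := if_pos he
    have hss : s * s = s := by
      calc s * s = (∑ e ∈ S', f' e) * s := by rw [← hs]
        _ = ∑ e ∈ S', f' e * s := Finset.sum_mul _ _ _
        _ = ∑ e ∈ S', f' e := Finset.sum_congr rfl (fun e he => (hsf e he).2)
        _ = s := hs.symm
    set t := (1 - s) * E1 * (1 - s) with htdef
    have horth_t : ∀ e ∈ S', f' e * t = 0 ∧ t * f' e = 0 := by
      intro e he
      have h1 : f' e * (1 - s) = 0 := by
        rw [mul_sub, mul_one, (hsf e he).2, sub_self]
      have h2 : (1 - s) * f' e = 0 := by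
        rw [sub_mul, one_mul, (hsf e he).1, sub_self]
      constructor
      · calc f' e * t = f' e * ((1 - s) * E1 * (1 - s)) := by rw [htdef]
          _ = (f' e * (1 - s)) * E1 * (1 - s) := by
              rw [← mul_assoc, ← mul_assoc]
          _ = 0 := by rw [h1, zero_mul, zero_mul]
      · calc t * f' e = (1 - s) * E1 * ((1 - s) * f' e) := by
              rw [htdef, mul_assoc]
          _ = 0 := by rw [h2, mul_zero]
    -- triangularity of t
    have hfle : ∀ e, e ∈ S' → f' e ∈ spanS K {x | leJ x e.1} := by
      intro e he
      have h2 : spanS K {x | leJ x e.1 ∧ x ≠ e.1} ≤ spanS K {x | leJ x e.1} :=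
        spanS_mono K (fun x hx => hx.1)
      have h4 := Submodule.add_mem _ (h2 (htri e he))
        (of_mem_spanS K (D := {x | leJ x e.1}) (leJ_refl e.1))
      rwa [sub_add_cancel] at h4
    have hmulE : ∀ e, e ∈ S' → ∀ w, w ∈ spanS K {x | leJ x e.1} →
        w * E1 ∈ spanS K {x | leJ x estar.1 ∧ x ≠ estar.1} := by
      intro e he w hw
      induction hw using Submodule.span_induction with
      | mem p hp =>
        obtain ⟨x, hx, rfl⟩ := hp
        rw [hE1, ← map_mul]
        apply of_mem_spanS
        refine ⟨leJ_mul_right x estar.1, ?_⟩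
        intro hxe
        have h5 : leJ estar.1 x := ⟨1, estar.1, by rw [one_mul, hxe]⟩
        exact hestarS' (hdc' estar e (leJ_trans h5 hx) he)
      | zero => rw [zero_mul]; exact Submodule.zero_mem _
      | add p q hp hq ihp ihq => rw [add_mul]; exact Submodule.add_mem _ ihp ihq
      | smul c p hp ihp => rw [smul_mul_assoc]; exact Submodule.smul_mem _ _ ihp
    have hEmul : ∀ e, e ∈ S' → ∀ w, w ∈ spanS K {x | leJ x e.1} →
        E1 * w ∈ spanS K {x | leJ x estar.1 ∧ x ≠ estar.1} := by
      intro e he w hw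
      induction hw using Submodule.span_induction with
      | mem p hp =>
        obtain ⟨x, hx, rfl⟩ := hp
        rw [hE1, ← map_mul]
        apply of_mem_spanS
        refine ⟨leJ_mul_left estar.1 x, ?_⟩
        intro hxe
        have h5 : leJ estar.1 x := ⟨estar.1, 1, by rw [mul_one, hxe]⟩
        exact hestarS' (hdc' estar e (leJ_trans h5 hx) he)
      | zero => rw [mul_zero]; exact Submodule.zero_mem _
      | add p q hp hq ihp ihq => rw [mul_add]; exact Submodule.add_mem _ ihp ihq
      | smul c p hp ihp => rw [mul_smul_comm]; exact Submodule.smul_mem _ _ ihp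
    have hdcstar := downclosed_strict hJ estar.1
    have hsE : s * E1 ∈ spanS K {x | leJ x estar.1 ∧ x ≠ estar.1} := by
      have : s * E1 = ∑ e ∈ S', f' e * E1 := by
        calc s * E1 = (∑ e ∈ S', f' e) * E1 := by rw [← hs]
          _ = ∑ e ∈ S', f' e * E1 := Finset.sum_mul _ _ _
      rw [this]
      exact Submodule.sum_mem _ (fun e he => hmulE e he _ (hfle e he))
    have hEs : E1 * s ∈ spanS K {x | leJ x estar.1 ∧ x ≠ estar.1} := by
      have : E1 * s = ∑ e ∈ S', E1 * f' e := by
        calc E1 * s = E1 * (∑ e ∈ S', f' e) := by rw [← hs]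
          _ = ∑ e ∈ S', E1 * f' e := Finset.mul_sum _ _ _
      rw [this]
      exact Submodule.sum_mem _ (fun e he => hEmul e he _ (hfle e he))
    have htri_t : t - E1 ∈ spanS K {x | leJ x estar.1 ∧ x ≠ estar.1} := by
      have hexp : t - E1 = (s * E1) * s - s * E1 - E1 * s := by
        rw [htdef]; noncomm_ring
      rw [hexp]
      exact sub_mem (sub_mem (spanS_mul_right K hdcstar hsE s) hsE) hEs
    have hEE : E1 * E1 = E1 := by
      rw [hE1, ← map_mul]
      exact congrArg _ estar.2
    have hu_span : t * t - t ∈ spanS K {x | leJ x estar.1 ∧ x ≠ estar.1} := by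
      have hexp2 : t * t - t
          = E1 * (t - E1) + (t - E1) * E1 + (t - E1) * (t - E1) + (E1 * E1 - E1)
            - (t - E1) := by noncomm_ring
      rw [hexp2, hEE, sub_self, add_zero]
      exact sub_mem (add_mem (add_mem (spanS_mul_left K hdcstar htri_t E1)
        (spanS_mul_right K hdcstar htri_t E1)) (spanS_mul_right K hdcstar htri_t (t - E1)))
        htri_t
    -- character values of t
    have hphiE : ∀ e'' : Et M, phi K hJ e'' E1 = if leJ e''.1 estar.1 then 1 else 0 := by
      intro e''
      rw [hE1, phi_of]
      exact if_congr (mul_idem_iff_leJ hJ e''.2) rfl rfl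
    have hphis : ∀ e'' : Et M, phi K hJ e'' s = if e'' ∈ S' then 1 else 0 := by
      intro e''
      calc phi K hJ e'' s = phi K hJ e'' (∑ e ∈ S', f' e) := by rw [← hs]
        _ = ∑ e ∈ S', phi K hJ e'' (f' e) := map_sum _ _ _
        _ = ∑ e ∈ S', if e'' = e then 1 else 0 :=
            Finset.sum_congr rfl (fun e he => hph e he e'')
        _ = if e'' ∈ S' then 1 else 0 := Finset.sum_ite_eq S' e'' (fun _ => (1 : K))
    have hphi_t : ∀ e'' : Et M, phi K hJ e'' t = if e'' = estar then 1 else 0 := by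
      intro e''
      have hcomp : phi K hJ e'' t
          = (1 - phi K hJ e'' s) * phi K hJ e'' E1 * (1 - phi K hJ e'' s) := by
        rw [htdef, map_mul, map_mul, map_sub, map_one]
      rw [hcomp, hphiE, hphis]
      by_cases hc1 : e'' = estar
      · subst hc1
        rw [if_pos rfl, if_neg (by exact hestarS'), if_pos (leJ_refl _)]
        norm_num
      · rw [if_neg hc1]
        by_cases hc2 : leJ e''.1 estar.1
        · have he''S' : e'' ∈ S' := Finset.mem_erase.mpr ⟨hc1, hdc e'' estar hc2 hestar⟩
          rw [if_pos he''S', if_pos hc2]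
          norm_num
        · rw [if_neg hc2]
          norm_num
    have hphi_u : ∀ e'' : Et M, phi K hJ e'' (t * t - t) = 0 := by
      intro e''
      rw [map_sub, map_mul, hphi_t]
      by_cases hc : e'' = estar <;> simp [hc]
    -- nilpotency of t*t - t
    have hnil : ∃ n, (t * t - t) ^ (n + 1) = 0 := by
      have hcoe : (↑(Finset.univ.filter fun x : M => leJ x estar.1 ∧ x ≠ estar.1) : Set M)
          = {x | leJ x estar.1 ∧ x ≠ estar.1} := by
        ext x; simp
      apply nil K hJ (Finset.univ.filter fun x : M => leJ x estar.1 ∧ x ≠ estar.1).card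
        (Finset.univ.filter fun x : M => leJ x estar.1 ∧ x ≠ estar.1) le_rfl
      · intro a b hab hb
        rw [Finset.mem_filter] at hb ⊢
        exact ⟨Finset.mem_univ a, hdcstar a b hab hb.2⟩
      · exact hphi_u
      · rw [hcoe]; exact hu_span
    obtain ⟨n, hn⟩ := hnil
    obtain ⟨fnew, zc, hfnew_idem, hfnew_mem, hfnew_sub⟩ := lift_idem K n t hn
    have horth_new : ∀ e ∈ S', f' e * fnew = 0 ∧ fnew * f' e = 0 := by
      intro e he
      have hl : powSpan K t ≤ LinearMap.ker (LinearMap.mulLeft K (f' e)) := by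
        rw [powSpan, Submodule.span_le]
        rintro _ ⟨m, rfl⟩
        simp only [SetLike.mem_coe, LinearMap.mem_ker, LinearMap.mulLeft_apply]
        show f' e * t ^ (m + 1) = 0
        rw [pow_succ', ← mul_assoc, (horth_t e he).1, zero_mul]
      have hr : powSpan K t ≤ LinearMap.ker (LinearMap.mulRight K (f' e)) := by
        rw [powSpan, Submodule.span_le]
        rintro _ ⟨m, rfl⟩
        simp only [SetLike.mem_coe, LinearMap.mem_ker, LinearMap.mulRight_apply]
        show t ^ (m + 1) * f' e = 0
        rw [pow_succ, mul_assoc, (horth_t e he).2, mul_zero]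
      constructor
      · have := hl hfnew_mem
        simpa using this
      · have := hr hfnew_mem
        simpa using this
    have hnew_tri : fnew - E1 ∈ spanS K {x | leJ x estar.1 ∧ x ≠ estar.1} := by
      have hsplit : fnew - E1 = (t * t - t) * zc + (t - E1) := by
        calc fnew - E1 = (fnew - t) + (t - E1) := (sub_add_sub_cancel _ _ _).symm
          _ = (t * t - t) * zc + (t - E1) := by rw [hfnew_sub]
      rw [hsplit]
      exact add_mem (spanS_mul_right K hdcstar hu_span zc) htri_t
    have hnew_phi : ∀ e'' : Et M, phi K hJ e'' fnew = if e'' = estar then 1 else 0 := by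
      intro e''
      calc phi K hJ e'' fnew = phi K hJ e'' ((fnew - t) + t) := by rw [sub_add_cancel]
        _ = phi K hJ e'' ((t * t - t) * zc) + phi K hJ e'' t := by
            rw [map_add, hfnew_sub]
        _ = if e'' = estar then 1 else 0 := by
            rw [map_mul, hphi_u e'', zero_mul, zero_add, hphi_t]
    refine ⟨Function.update f' estar fnew, ?_, ?_, ?_⟩
    · intro e he e' he'
      by_cases h1 : e = estar <;> by_cases h2 : e' = estar
      · subst h1; subst h2
        rw [Function.update_self, if_pos rfl]
        exact hfnew_idem
      · subst h1
        have he'S' : e' ∈ S' := Finset.mem_erase.mpr ⟨h2, he'⟩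
        rw [Function.update_self, Function.update_of_ne h2, if_neg (fun h => h2 h.symm)]
        exact (horth_new e' he'S').2
      · subst h2
        have heS' : e ∈ S' := Finset.mem_erase.mpr ⟨h1, he⟩
        rw [Function.update_of_ne h1, Function.update_self, if_neg h1]
        exact (horth_new e heS').1
      · have heS' : e ∈ S' := Finset.mem_erase.mpr ⟨h1, he⟩
        have he'S' : e' ∈ S' := Finset.mem_erase.mpr ⟨h2, he'⟩
        rw [Function.update_of_ne h1, Function.update_of_ne h2]
        exact horth e heS' e' he'S'
    · intro e he
      by_cases h1 : e = estar
      · subst h1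
        rw [Function.update_self]
        exact hnew_tri
      · rw [Function.update_of_ne h1]
        exact htri e (Finset.mem_erase.mpr ⟨h1, he⟩)
    · intro e he e''
      by_cases h1 : e = estar
      · subst h1
        rw [Function.update_self]
        exact hnew_phi e''
      · rw [Function.update_of_ne h1]
        exact hph e (Finset.mem_erase.mpr ⟨h1, he⟩) e''

theorem mem_jacobson_of_phi_eq_zero (hJ : JTrivial M) (w : MonoidAlgebra K M)
    (hw : ∀ e : Et M, phi K hJ e w = 0) :
    w ∈ Ideal.jacobson (⊥ : Ideal (MonoidAlgebra K M)) := by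
  have hnil : ∀ y : MonoidAlgebra K M, (∀ e : Et M, phi K hJ e y = 0) → IsNilpotent y := by
    intro y hy
    obtain ⟨n, hn⟩ := nil K hJ Finset.univ.card Finset.univ le_rfl
      (fun _ _ _ _ => Finset.mem_univ _) y hy
      (mem_spanS K (fun z _ => by simp))
    exact ⟨n + 1, hn⟩
  rw [Ideal.jacobson]
  rw [Ideal.mem_sInf]
  rintro J ⟨-, hJmax⟩
  by_contra hwJ
  have hlt : J < J ⊔ Ideal.span {w} := by
    refine lt_of_le_of_ne le_sup_left (fun h => hwJ ?_)
    rw [h]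
    exact Submodule.mem_sup_right (Ideal.subset_span rfl)
  have htop : J ⊔ Ideal.span {w} = ⊤ := hJmax.out.2 _ hlt
  have h1 : (1 : MonoidAlgebra K M) ∈ J ⊔ Ideal.span {w} := by
    rw [htop]; exact Submodule.mem_top
  obtain ⟨x, hxJ, y, hy, hxy⟩ := Submodule.mem_sup.mp h1
  obtain ⟨a, hay⟩ := Submodule.mem_span_singleton.mp hy
  have hynil : IsNilpotent y := by
    apply hnil
    intro e
    rw [← hay, smul_eq_mul, map_mul, hw e, mul_zero]
  have hxunit : IsUnit x := by
    have hx1 : x = 1 - y := eq_sub_of_add_eq hxy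
    rw [hx1]
    exact hynil.isUnit_one_sub
  exact hJmax.ne_top (J.eq_top_of_isUnit_mem hxJ hxunit)

theorem phi_g (hJ : JTrivial M) (g : Et M → MonoidAlgebra K M)
    (hg : ∀ e : Et M, MonoidAlgebra.of K M e.1
      = ∑ e' ∈ Finset.univ.filter (fun e' : Et M => leJ e'.1 e.1), g e') :
    ∀ (n : ℕ) (e : Et M),
      (Finset.univ.filter (fun e' : Et M => leJ e'.1 e.1 ∧ e' ≠ e)).card ≤ n →
      ∀ e'' : Et M, phi K hJ e'' (g e) = if e'' = e then 1 else 0 := by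
  intro n
  induction n with
  | zero =>
    intro e hcard e''
    have hempty : (Finset.univ.filter (fun e' : Et M => leJ e'.1 e.1 ∧ e' ≠ e)) = ∅ :=
      Finset.card_eq_zero.mp (Nat.le_zero.mp hcard)
    have hins : Finset.univ.filter (fun e' : Et M => leJ e'.1 e.1)
        = insert e (Finset.univ.filter (fun e' : Et M => leJ e'.1 e.1 ∧ e' ≠ e)) := by
      ext a
      simp only [Finset.mem_filter, Finset.mem_insert, Finset.mem_univ, true_and]
      constructor
      · intro h
        by_cases ha : a = e
        · exact Or.inl ha
        · exact Or.inr ⟨h, ha⟩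
      · rintro (rfl | ⟨h, -⟩)
        · exact leJ_refl _
        · exact h
    have hnotmem : e ∉ Finset.univ.filter (fun e' : Et M => leJ e'.1 e.1 ∧ e' ≠ e) := by
      simp
    have hsum := congrArg (phi K hJ e'') (hg e)
    rw [phi_of, hins, Finset.sum_insert hnotmem, map_add, hempty, Finset.sum_empty,
      map_zero, add_zero] at hsum
    rw [← hsum]
    by_cases h1 : e'' = e
    · subst h1
      rw [if_pos (show e''.1 * e''.1 = e''.1 from e''.2), if_pos rfl]
    · rw [if_neg h1]
      rw [if_neg]
      intro hc
      have hle : leJ e''.1 e.1 := (mul_idem_iff_leJ hJ e''.2).mp hc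
      have : e'' ∈ (∅ : Finset (Et M)) := by
        rw [← hempty]
        exact Finset.mem_filter.mpr ⟨Finset.mem_univ _, hle, h1⟩
      simp at this
  | succ n ihn =>
    intro e hcard e''
    have hins : Finset.univ.filter (fun e' : Et M => leJ e'.1 e.1)
        = insert e (Finset.univ.filter (fun e' : Et M => leJ e'.1 e.1 ∧ e' ≠ e)) := by
      ext a
      simp only [Finset.mem_filter, Finset.mem_insert, Finset.mem_univ, true_and]
      constructor
      · intro h
        by_cases ha : a = e
        · exact Or.inl ha
        · exact Or.inr ⟨h, ha⟩
      · rintro (rfl | ⟨h, -⟩)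
        · exact leJ_refl _
        · exact h
    have hnotmem : e ∉ Finset.univ.filter (fun e' : Et M => leJ e'.1 e.1 ∧ e' ≠ e) := by
      simp
    have hsum := congrArg (phi K hJ e'') (hg e)
    rw [phi_of, hins, Finset.sum_insert hnotmem, map_add, map_sum] at hsum
    have hstrict : ∀ e' ∈ Finset.univ.filter (fun a : Et M => leJ a.1 e.1 ∧ a ≠ e),
        phi K hJ e'' (g e') = if e'' = e' then 1 else 0 := by
      intro e' he'
      rw [Finset.mem_filter] at he'
      obtain ⟨-, hle, hne⟩ := he'
      apply ihn e' ?_ e''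
      have hsub : Finset.univ.filter (fun a : Et M => leJ a.1 e'.1 ∧ a ≠ e')
          ⊆ (Finset.univ.filter (fun a : Et M => leJ a.1 e.1 ∧ a ≠ e)).erase e' := by
        intro a ha
        rw [Finset.mem_filter] at ha
        obtain ⟨-, hale, hane⟩ := ha
        refine Finset.mem_erase.mpr ⟨hane, Finset.mem_filter.mpr
          ⟨Finset.mem_univ a, leJ_trans hale hle, ?_⟩⟩
        rintro rfl
        exact hne (Subtype.ext (leJ_antisymm hJ hle hale))
      have hmem : e' ∈ Finset.univ.filter (fun a : Et M => leJ a.1 e.1 ∧ a ≠ e) :=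
        Finset.mem_filter.mpr ⟨Finset.mem_univ _, hle, hne⟩
      have hpos : 1 ≤ (Finset.univ.filter (fun a : Et M => leJ a.1 e.1 ∧ a ≠ e)).card :=
        Finset.card_pos.mpr ⟨e', hmem⟩
      calc (Finset.univ.filter (fun a : Et M => leJ a.1 e'.1 ∧ a ≠ e')).card
          ≤ ((Finset.univ.filter (fun a : Et M => leJ a.1 e.1 ∧ a ≠ e)).erase e').card :=
            Finset.card_le_card hsub
        _ = (Finset.univ.filter (fun a : Et M => leJ a.1 e.1 ∧ a ≠ e)).card - 1 :=
            Finset.card_erase_of_mem hmem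
        _ ≤ n := by omega
    rw [Finset.sum_congr rfl hstrict, Finset.sum_ite_eq _ e'' (fun _ => (1 : K))] at hsum
    by_cases h1 : e'' = e
    · subst h1
      rw [if_pos (show e''.1 * e''.1 = e''.1 from e''.2), if_neg hnotmem, add_zero] at hsum
      rw [if_pos rfl, ← hsum]
    · rw [if_neg h1]
      by_cases h2 : leJ e''.1 e.1
      · have hmem : e'' ∈ Finset.univ.filter (fun a : Et M => leJ a.1 e.1 ∧ a ≠ e) :=
          Finset.mem_filter.mpr ⟨Finset.mem_univ _, h2, h1⟩
        rw [if_pos hmem, if_pos ((mul_idem_iff_leJ hJ e''.2).mpr h2)] at hsum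
        have h3 := eq_sub_of_add_eq hsum.symm
        rw [sub_self] at h3
        exact h3
      · have hnmem : e'' ∉ Finset.univ.filter (fun a : Et M => leJ a.1 e.1 ∧ a ≠ e) := by
          rw [Finset.mem_filter]
          rintro ⟨-, hle, -⟩
          exact h2 hle
        rw [if_neg hnmem, add_zero,
          if_neg (fun hc => h2 ((mul_idem_iff_leJ hJ e''.2).mp hc))] at hsum
        exact hsum.symm

end Build

end Algebra

end JTProofAux

/-- Lifting of idempotents: let `K` be a field, `M` a finite `J`-trivial monoid, and let
`(g_e)_{e ∈ E(M)}` be the unique family in the `K`-span of the idempotents satisfying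
`e = Σ_{e' ≤_J e} g_{e'}`.  Then there is a family `(f_e)_{e ∈ E(M)}` in `K[M]` which is a
decomposition of the identity into orthogonal idempotents, is compatible with the semi-simple
quotient (`f_e ≡ g_e` mod the radical), and is uni-triangular with respect to `≤_J`. -/
theorem lifting_of_idempotents (K : Type*) [Field K] {M : Type*} [Monoid M] [Fintype M]
    (hJ : JTrivial M)
    (g : {e : M // IsIdempotentElem e} → MonoidAlgebra K M)
    (hgspan : ∀ e : {e : M // IsIdempotentElem e},
      g e ∈ Submodule.span K
        ((fun z : M => (MonoidAlgebra.of K M z : MonoidAlgebra K M)) ''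
          {z : M | IsIdempotentElem z}))
    (hg : ∀ e : {e : M // IsIdempotentElem e},
      (MonoidAlgebra.of K M (e : M) : MonoidAlgebra K M)
        = ∑ e' ∈ Finset.univ.filter
            (fun e' : {e : M // IsIdempotentElem e} => leJ (e' : M) (e : M)), g e') :
    ∃ f : {e : M // IsIdempotentElem e} → MonoidAlgebra K M,
      (∑ e : {e : M // IsIdempotentElem e}, f e) = 1 ∧
      (∀ e e' : {e : M // IsIdempotentElem e},
        f e * f e' = if e = e' then f e else 0) ∧
      (∀ e : {e : M // IsIdempotentElem e},
        f e - g e ∈ Ideal.jacobson (⊥ : Ideal (MonoidAlgebra K M))) ∧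
      (∀ e : {e : M // IsIdempotentElem e},
        f e - MonoidAlgebra.of K M (e : M) ∈
          Submodule.span K
            ((fun z : M => (MonoidAlgebra.of K M z : MonoidAlgebra K M)) ''
              {x : M | leJ x (e : M) ∧ x ≠ (e : M)})) := by
  classical
  open JTProofAux in
  have hone : IsIdempotentElem (1 : M) := one_mul 1
  set one : JTProofAux.Et M := ⟨1, hone⟩ with honedef
  set S0 : Finset (JTProofAux.Et M) := Finset.univ.erase one with hS0
  have hmemS0 : ∀ e : JTProofAux.Et M, e ∈ S0 ↔ e ≠ one := by
    intro e
    rw [hS0, Finset.mem_erase]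
    simp
  have hdc0 : ∀ a b : JTProofAux.Et M, leJ a.1 b.1 → b ∈ S0 → a ∈ S0 := by
    intro a b hab hb
    rw [hmemS0] at hb ⊢
    rintro rfl
    exact hb (Subtype.ext (JTProofAux.eq_one_of_one_leJ hJ hab))
  obtain ⟨f', horth, htri, hph⟩ := JTProofAux.build K hJ S0.card S0 le_rfl hdc0
  set s := ∑ e ∈ S0, f' e with hs
  have hsf : ∀ e ∈ S0, s * f' e = f' e ∧ f' e * s = f' e := by
    intro e he
    constructor
    · calc s * f' e = (∑ e' ∈ S0, f' e') * f' e := by rw [← hs]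
        _ = ∑ e' ∈ S0, f' e' * f' e := Finset.sum_mul _ _ _
        _ = ∑ e' ∈ S0, if e' = e then f' e' else 0 :=
            Finset.sum_congr rfl (fun e' he' => horth e' he' e he)
        _ = if e ∈ S0 then f' e else 0 := Finset.sum_ite_eq' S0 e (fun e' => f' e')
        _ = f' e := if_pos he
    · calc f' e * s = f' e * (∑ e' ∈ S0, f' e') := by rw [← hs]
        _ = ∑ e' ∈ S0, f' e * f' e' := Finset.mul_sum _ _ _
        _ = ∑ e' ∈ S0, if e = e' then f' e else 0 :=
            Finset.sum_congr rfl (fun e' he' => horth e he e' he')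
        _ = if e ∈ S0 then f' e else 0 := Finset.sum_ite_eq S0 e (fun _ => f' e)
        _ = f' e := if_pos he
  have hss : s * s = s := by
    calc s * s = (∑ e ∈ S0, f' e) * s := by rw [← hs]
      _ = ∑ e ∈ S0, f' e * s := Finset.sum_mul _ _ _
      _ = ∑ e ∈ S0, f' e := Finset.sum_congr rfl (fun e he => (hsf e he).2)
      _ = s := hs.symm
  set F := fun e : JTProofAux.Et M => if e = one then 1 - s else f' e with hF
  have hFone : F one = 1 - s := if_pos rfl
  have hFne : ∀ e : JTProofAux.Et M, e ≠ one → F e = f' e := fun e he => if_neg he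
  have hphis : ∀ e'' : JTProofAux.Et M,
      JTProofAux.phi K hJ e'' s = if e'' ∈ S0 then 1 else 0 := by
    intro e''
    calc JTProofAux.phi K hJ e'' s
        = JTProofAux.phi K hJ e'' (∑ e ∈ S0, f' e) := by rw [← hs]
      _ = ∑ e ∈ S0, JTProofAux.phi K hJ e'' (f' e) := map_sum _ _ _
      _ = ∑ e ∈ S0, if e'' = e then 1 else 0 :=
          Finset.sum_congr rfl (fun e he => hph e he e'')
      _ = if e'' ∈ S0 then 1 else 0 := Finset.sum_ite_eq S0 e'' (fun _ => (1 : K))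
  have hphiF : ∀ e e'' : JTProofAux.Et M,
      JTProofAux.phi K hJ e'' (F e) = if e'' = e then 1 else 0 := by
    intro e e''
    by_cases h1 : e = one
    · subst h1
      rw [hFone, map_sub, map_one, hphis]
      by_cases h2 : e'' = one
      · subst h2
        rw [if_neg (fun h => ((hmemS0 one).mp h) rfl), if_pos rfl]
        norm_num
      · rw [if_pos ((hmemS0 e'').mpr h2), if_neg h2]
        norm_num
    · rw [hFne e h1]
      exact hph e ((hmemS0 e).mpr h1) e''
  refine ⟨F, ?_, ?_, ?_, ?_⟩
  · -- sum to one
    have h1 : ∑ e : JTProofAux.Et M, F e = F one + ∑ e ∈ Finset.univ.erase one, F e :=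
      (Finset.add_sum_erase _ F (Finset.mem_univ one)).symm
    have h2 : ∑ e ∈ S0, F e = s := by
      calc ∑ e ∈ S0, F e = ∑ e ∈ S0, f' e :=
            Finset.sum_congr rfl (fun e he => hFne e ((hmemS0 e).mp he))
        _ = s := hs.symm
    rw [h1, ← hS0, h2, hFone, sub_add_cancel]
  · -- orthogonality
    intro e e'
    by_cases h1 : e = one <;> by_cases h2 : e' = one
    · subst h1; subst h2
      rw [hFone, if_pos rfl]
      have hx : (1 - s) * (1 - s) = 1 - s - s + s * s := by noncomm_ring
      rw [hx, hss]
      abel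
    · subst h1
      have he'S0 : e' ∈ S0 := (hmemS0 e').mpr h2
      rw [hFone, hFne e' h2, if_neg (fun h => h2 h.symm)]
      rw [sub_mul, one_mul, (hsf e' he'S0).1, sub_self]
    · subst h2
      have heS0 : e ∈ S0 := (hmemS0 e).mpr h1
      rw [hFne e h1, hFone, if_neg h1]
      rw [mul_sub, mul_one, (hsf e heS0).2, sub_self]
    · rw [hFne e h1, hFne e' h2]
      exact horth e ((hmemS0 e).mpr h1) e' ((hmemS0 e').mpr h2)
  · -- congruence modulo the radical
    intro e
    apply JTProofAux.mem_jacobson_of_phi_eq_zero K hJ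
    intro e''
    have hge : JTProofAux.phi K hJ e'' (g e) = if e'' = e then 1 else 0 :=
      JTProofAux.phi_g K hJ g hg
        ((Finset.univ.filter (fun e' : JTProofAux.Et M => leJ e'.1 e.1 ∧ e' ≠ e)).card)
        e le_rfl e''
    rw [map_sub, hphiF e e'', hge, sub_self]
  · -- triangularity
    intro e
    by_cases h1 : e = one
    · subst h1
      rw [hFone]
      have hof1 : MonoidAlgebra.of K M ((one : JTProofAux.Et M) : M) = 1 := map_one _
      have hres : (1 : MonoidAlgebra K M) - s
          - MonoidAlgebra.of K M ((one : JTProofAux.Et M) : M) = -s := by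
        rw [hof1]; abel
      rw [hres]
      apply neg_mem
      show s ∈ JTProofAux.spanS K
        {x : M | leJ x ((one : JTProofAux.Et M) : M) ∧ x ≠ ((one : JTProofAux.Et M) : M)}
      rw [hs]
      apply Submodule.sum_mem
      intro e he
      have hene : e ≠ one := (hmemS0 e).mp he
      have h1e : e.1 ≠ 1 := fun h => hene (Subtype.ext h)
      have hsubset : {x : M | leJ x e.1 ∧ x ≠ e.1}
          ⊆ {x : M | leJ x ((one : JTProofAux.Et M) : M) ∧ x ≠ ((one : JTProofAux.Et M) : M)} := by
        rintro x ⟨hxe, -⟩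
        refine ⟨JTProofAux.leJ_one x, ?_⟩
        rintro rfl
        exact h1e (JTProofAux.eq_one_of_one_leJ hJ hxe)
      have h4 := Submodule.add_mem _
        (JTProofAux.spanS_mono K hsubset (htri e he))
        (JTProofAux.of_mem_spanS K
          (show e.1 ∈ {x : M | leJ x ((one : JTProofAux.Et M) : M)
            ∧ x ≠ ((one : JTProofAux.Et M) : M)} from ⟨JTProofAux.leJ_one e.1, h1e⟩))
      rwa [sub_add_cancel] at h4
    · rw [hFne e h1]
      exact htri e ((hmemS0 e).mpr h1)
end
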